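/- arXiv:2304.01803 — 2 statements merged into one kernel-verified Lean document; each statement's English description precedes it below -/
import Mathlib

section
/- Let Y be complete with doubling measure ν and uniformly perfect at x_0 with constant κ, 0 < θ < 1, 1 ≤ p < ∞, and fix 0 < Θ < 1. If 0 < ΘR ≤ 2r ≤ R and B(x_0,2R) ≠ Y, then cap_{θ,p}(B(x_0,r), B(x_0,R)) ≃ ν(B(x_0,r))/r^{θp} ≃ ν(B(x_0,R))/R^{θp}, with comparison constants depending only on θ, p, κ, Θ and the doubling constant. -/
open MeasureTheory Metric Set ENNReal

open Classical in

/-- Pointwise Besov energy `∫_Y |u(x)-u(y)|^p / d(x,y)^{θp} · dν(y)/ν(B(x,d(x,y)))`. -/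
noncomputable def besovPointEnergy {Y : Type*} [MetricSpace Y] [MeasurableSpace Y]
    (ν : Measure Y) (θ p : ℝ) (u : Y → ℝ) (x : Y) : ℝ≥0∞ :=
  ∫⁻ y, (if x = y then 0 else
    ENNReal.ofReal (|u x - u y| ^ p) /
      (ENNReal.ofReal (dist x y ^ (θ * p)) * ν (ball x (dist x y)))) ∂ν

/-- The Besov seminorm to the power `p`:
`[u]_{θ,p}^p = ∫_Y ∫_Y |u(x)-u(y)|^p / d(x,y)^{θp} · dν(y) dν(x)/ν(B(x,d(x,y)))`. -/
noncomputable def besovEnergy {Y : Type*} [MetricSpace Y] [MeasurableSpace Y]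
    (ν : Measure Y) (θ p : ℝ) (u : Y → ℝ) : ℝ≥0∞ :=
  ∫⁻ x, besovPointEnergy ν θ p u x ∂ν

/-- `u` is admissible for the Besov norm-capacity of `E`:
`0 ≤ u ≤ 1` everywhere and `u = 1` in a neighbourhood of `E`. -/
def normAdmissible {Y : Type*} [MetricSpace Y] (E : Set Y) (u : Y → ℝ) : Prop :=
  (∀ z, 0 ≤ u z ∧ u z ≤ 1) ∧ ∃ G : Set Y, IsOpen G ∧ E ⊆ G ∧ ∀ z ∈ G, u z = 1

/-- The Besov norm-capacity `C_{θ,p}(E) = inf (‖u‖_{L^p}^p + [u]_{θ,p}^p)` over admissible `u`. -/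
noncomputable def besovNormCap {Y : Type*} [MetricSpace Y] [MeasurableSpace Y]
    (ν : Measure Y) (θ p : ℝ) (E : Set Y) : ℝ≥0∞ :=
  ⨅ (u : Y → ℝ) (_ : normAdmissible E u),
    (∫⁻ x, ENNReal.ofReal (|u x| ^ p) ∂ν) + besovEnergy ν θ p u

/-- `u` is admissible for the Besov condenser capacity of `(E, Ω)`:
`0 ≤ u ≤ 1` everywhere, `u = 1` in a neighbourhood of `E`, and `supp u ⋐ Ω`. -/
def condAdmissible {Y : Type*} [MetricSpace Y] (E Ω : Set Y) (u : Y → ℝ) : Prop :=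
  (∀ z, 0 ≤ u z ∧ u z ≤ 1) ∧ (∃ G : Set Y, IsOpen G ∧ E ⊆ G ∧ ∀ z ∈ G, u z = 1) ∧
    IsCompact (tsupport u) ∧ tsupport u ⊆ Ω

/-- The Besov condenser capacity `cap_{θ,p}(E,Ω) = inf [u]_{θ,p}^p` over admissible `u`. -/
noncomputable def besovCondCap {Y : Type*} [MetricSpace Y] [MeasurableSpace Y]
    (ν : Measure Y) (θ p : ℝ) (E Ω : Set Y) : ℝ≥0∞ :=
  ⨅ (u : Y → ℝ) (_ : condAdmissible E Ω u), besovEnergy ν θ p u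

/-- `ν` is doubling with constant `C`. -/
def IsDoublingWith {Y : Type*} [MetricSpace Y] [MeasurableSpace Y]
    (ν : Measure Y) (C : ℝ) : Prop :=
  ∀ (x : Y) (r : ℝ), 0 < r → ν (ball x (2 * r)) ≤ ENNReal.ofReal C * ν (ball x r)

/-- `ν` is positive and finite on balls. -/
def BallsPosFinite {Y : Type*} [MetricSpace Y] [MeasurableSpace Y] (ν : Measure Y) : Prop :=
  ∀ (x : Y) (r : ℝ), 0 < r → 0 < ν (ball x r) ∧ ν (ball x r) < ∞

/-- `X` is uniformly perfect at `x` with constant `κ`. -/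
def UnifPerfectAt {Y : Type*} [MetricSpace Y] (x : Y) (κ : ℝ) : Prop :=
  ∀ r : ℝ, 0 < r → ball x (κ * r) ≠ univ → (ball x (κ * r) \ ball x r).Nonempty

universe u

section Helpers
open Metric MeasureTheory Set ENNReal

private lemma ofReal_div_eq_ofReal_div {a b c d : ℝ} (hb : 0 < b) (hd : 0 < d)
    (ha : 0 ≤ a) (hc : 0 ≤ c) (h : a * d = c * b) :
    ENNReal.ofReal a / ENNReal.ofReal b = ENNReal.ofReal c / ENNReal.ofReal d := by
  rw [← ENNReal.ofReal_div_of_pos hb, ← ENNReal.ofReal_div_of_pos hd]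
  congr 1
  rw [div_eq_div_iff hb.ne' hd.ne']
  linarith

private lemma cancel_mul_div {c e m : ℝ≥0∞} (hm0 : m ≠ 0) (hmt : m ≠ ∞) :
    c / (e * m) * m = c / e := by
  rw [div_eq_mul_inv, div_eq_mul_inv, ENNReal.mul_inv (Or.inr hmt) (Or.inr hm0), ← mul_assoc,
    mul_assoc (c * e⁻¹), ENNReal.inv_mul_cancel hm0 hmt, mul_one]

private lemma div_div_K {c x K : ℝ≥0∞} (hK0 : K ≠ 0) (hKt : K ≠ ∞) :
    c / (x / K) = K * (c / x) := by
  rw [div_eq_mul_inv x, div_eq_mul_inv,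
    ENNReal.mul_inv (Or.inr (ENNReal.inv_ne_top.mpr hK0)) (Or.inr (ENNReal.inv_ne_zero.mpr hKt)),
    inv_inv, div_eq_mul_inv]
  ring

private lemma div_le_K_mul_div {c e m M K : ℝ≥0∞} (hK0 : K ≠ 0) (hKt : K ≠ ∞)
    (h : M ≤ K * m) : c / (e * m) ≤ K * (c / (e * M)) := by
  have h1 : M / K ≤ m := ENNReal.div_le_of_le_mul' h
  have h2 : e * (M / K) ≤ e * m := mul_le_mul_right h1 e
  calc c / (e * m) ≤ c / (e * (M / K)) := ENNReal.div_le_div_left h2 c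
    _ = c / (e * M / K) := by rw [mul_div_assoc]
    _ = K * (c / (e * M)) := div_div_K hK0 hKt

private lemma inv_one_sub_ne_top {q : ℝ≥0∞} (hq : q < 1) : (1 - q)⁻¹ ≠ ∞ := by
  refine ENNReal.inv_ne_top.mpr ?_
  rw [Ne, tsub_eq_zero_iff_le]
  exact not_le.mpr hq

private lemma tsum_ofReal_geom_div (a q : ℝ) (ha : 0 ≤ a) (hq0 : 0 ≤ q) (x : ℝ≥0∞) :
    ∑' k : ℕ, ENNReal.ofReal (a * q ^ k) / x
      = ENNReal.ofReal a * (1 - ENNReal.ofReal q)⁻¹ / x := by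
  have hterm : ∀ k : ℕ, ENNReal.ofReal (a * q ^ k) / x
      = ENNReal.ofReal q ^ k * (ENNReal.ofReal a / x) := by
    intro k
    rw [ENNReal.ofReal_mul ha, ← ENNReal.ofReal_pow hq0, div_eq_mul_inv, div_eq_mul_inv]
    ring
  rw [tsum_congr hterm, ENNReal.tsum_mul_right, ENNReal.tsum_geometric, div_eq_mul_inv,
    div_eq_mul_inv]
  ring

private lemma pow_rpow_comm {t : ℝ} (ht : 0 ≤ t) (n : ℕ) (y : ℝ) :
    (t ^ n) ^ y = (t ^ y) ^ n := by
  rw [← Real.rpow_natCast t n, ← Real.rpow_mul ht, mul_comm, Real.rpow_mul ht, Real.rpow_natCast]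

private lemma ball_two_pow {Y : Type*} [MetricSpace Y] [MeasurableSpace Y] {ν : Measure Y}
    {Cν : ℝ} (hD : IsDoublingWith ν Cν) (x : Y) {s : ℝ} (hs : 0 < s) (n : ℕ) :
    ν (ball x (2 ^ n * s)) ≤ ENNReal.ofReal Cν ^ n * ν (ball x s) := by
  induction n with
  | zero => simp
  | succ n ih =>
      have h2 : (2:ℝ) ^ (n+1) * s = 2 * (2 ^ n * s) := by ring
      rw [h2]
      calc ν (ball x (2 * (2 ^ n * s))) ≤ ENNReal.ofReal Cν * ν (ball x (2 ^ n * s)) :=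
            hD x _ (by positivity)
        _ ≤ ENNReal.ofReal Cν * (ENNReal.ofReal Cν ^ n * ν (ball x s)) := mul_le_mul_right ih _
        _ = ENNReal.ofReal Cν ^ (n+1) * ν (ball x s) := by ring

private lemma ball_le_of_le {Y : Type*} [MetricSpace Y] [MeasurableSpace Y] {ν : Measure Y}
    {Cν : ℝ} (hD : IsDoublingWith ν Cν) (x : Y) {s t : ℝ} (hs : 0 < s) {n : ℕ}
    (h : t ≤ 2 ^ n * s) : ν (ball x t) ≤ ENNReal.ofReal Cν ^ n * ν (ball x s) :=
  le_trans (measure_mono (ball_subset_ball h)) (ball_two_pow hD x hs n)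

end Helpers

section Compactness
open Metric MeasureTheory Set ENNReal

private lemma compact_closedBall_of_doubling {Y : Type*} [MetricSpace Y] [MeasurableSpace Y]
    [BorelSpace Y] [CompleteSpace Y] {ν : Measure Y} {Cν : ℝ}
    (hD : IsDoublingWith ν Cν) (hB : BallsPosFinite ν) (x : Y) (s : ℝ) :
    IsCompact (closedBall x s) := by
  rcases le_or_gt s 0 with hs | hs
  · have hsub : closedBall x s ⊆ {x} := by
      intro y hy
      rw [mem_closedBall] at hy
      have h1 : dist y x ≤ 0 := hy.trans hs
      have : y = x := by
        have := dist_nonneg (x := y) (y := x)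
        have : dist y x = 0 := le_antisymm h1 this
        exact dist_eq_zero.mp this
      simp [this]
    exact isCompact_singleton.of_isClosed_subset Metric.isClosed_closedBall hsub
  refine TotallyBounded.isCompact_of_isClosed ?_ Metric.isClosed_closedBall
  by_contra hTB
  rw [Metric.totallyBounded_iff] at hTB
  push_neg at hTB
  obtain ⟨ε, hε, H⟩ := hTB
  have step : ∀ t : Finset Y, ∃ z, z ∈ closedBall x s ∧ ∀ y ∈ t, ε ≤ dist z y := by
    intro t
    have h1 := H t t.finite_toSet
    rw [Set.not_subset] at h1
    obtain ⟨z, hz1, hz2⟩ := h1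
    refine ⟨z, hz1, fun y hy => ?_⟩
    by_contra hlt
    exact hz2 (Set.mem_biUnion (Finset.mem_coe.mpr hy) (mem_ball.mpr (not_le.mp hlt)))
  choose g hg1 hg2 using step
  letI := Classical.decEq Y
  let F : ℕ → Finset Y := fun n => Nat.rec ∅ (fun _ t => insert (g t) t) n
  have hF : ∀ n, F (n+1) = insert (g (F n)) (F n) := fun n => rfl
  have hmono : ∀ m n, m ≤ n → F m ⊆ F n := by
    intro m n h
    induction n with
    | zero => rw [Nat.le_zero.mp h]
    | succ n ih =>
        rcases Nat.eq_or_lt_of_le h with rfl | h'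
        · exact Finset.Subset.refl _
        · rw [hF n]
          exact (ih (Nat.lt_succ_iff.mp h')).trans (Finset.subset_insert _ _)
  set z : ℕ → Y := fun n => g (F n) with hz
  have hcB : ∀ n, z n ∈ closedBall x s := fun n => hg1 (F n)
  have hsep : ∀ m n, m < n → ε ≤ dist (z n) (z m) := by
    intro m n h
    exact hg2 (F n) (z m) (hmono (m+1) n h (by rw [hF m]; exact Finset.mem_insert_self _ _))
  have hdisj : Pairwise (Function.onFun Disjoint (fun n => ball (z n) (ε/2))) := by
    intro m n hmn
    rcases hmn.lt_or_gt with h | h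
    · exact ball_disjoint_ball (by linarith [hsep m n h, dist_comm (z m) (z n)])
    · exact ball_disjoint_ball (by linarith [hsep n m h])
  have hmeas := measure_iUnion (μ := ν) hdisj (fun n => measurableSet_ball)
  have hsub : (⋃ n, ball (z n) (ε/2)) ⊆ ball x (s + ε) := by
    intro y hy
    simp only [mem_iUnion] at hy
    obtain ⟨n, hn⟩ := hy
    have h1 : dist (z n) x ≤ s := mem_closedBall.mp (hcB n)
    have h2 : dist y (z n) < ε/2 := mem_ball.mp hn
    rw [mem_ball]
    calc dist y x ≤ dist y (z n) + dist (z n) x := dist_triangle _ _ _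
      _ < s + ε := by linarith
  obtain ⟨n₀, hn₀⟩ := pow_unbounded_of_one_lt ((2*s+ε)/(ε/2)) (one_lt_two (α := ℝ))
  rw [div_lt_iff₀ (by linarith)] at hn₀
  have hlow : ∀ n, ν (ball x (s+ε)) ≤ ENNReal.ofReal Cν ^ n₀ * ν (ball (z n) (ε/2)) := by
    intro n
    have hss : ball x (s+ε) ⊆ ball (z n) (2 ^ n₀ * (ε/2)) := by
      intro y hy
      rw [mem_ball] at hy ⊢
      have h1 : dist x (z n) ≤ s := by rw [dist_comm]; exact mem_closedBall.mp (hcB n)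
      calc dist y (z n) ≤ dist y x + dist x (z n) := dist_triangle _ _ _
        _ < (s + ε) + s := by linarith
        _ ≤ 2 ^ n₀ * (ε/2) := by linarith
    exact (measure_mono hss).trans (ball_two_pow hD _ (by linarith) n₀)
  have hfin := (hB x (s+ε) (by linarith)).2
  have hpos := (hB x (s+ε) (by linarith)).1
  set c₀ := ν (ball x (s+ε)) / ENNReal.ofReal Cν ^ n₀ with hc₀def
  have hc₀ : c₀ ≠ 0 := by
    rw [hc₀def]
    simp only [Ne, ENNReal.div_eq_zero_iff, not_or]
    exact ⟨hpos.ne', ENNReal.pow_ne_top ENNReal.ofReal_ne_top⟩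
  have hterm : ∀ n, c₀ ≤ ν (ball (z n) (ε/2)) := fun n => ENNReal.div_le_of_le_mul' (hlow n)
  have htop : (⊤ : ℝ≥0∞) ≤ ν (⋃ n, ball (z n) (ε/2)) := by
    rw [hmeas]
    calc (⊤ : ℝ≥0∞) = ∑' _ : ℕ, c₀ := (ENNReal.tsum_const_eq_top_of_ne_zero hc₀).symm
      _ ≤ _ := ENNReal.tsum_le_tsum hterm
  have : (⊤ : ℝ≥0∞) < ⊤ := lt_of_le_of_lt (htop.trans (measure_mono hsub)) hfin
  exact absurd this (lt_irrefl _)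

end Compactness

section Cutoff
open Metric MeasureTheory Set ENNReal

private noncomputable def cutoff {Y : Type*} [MetricSpace Y] (x₀ : Y) (R : ℝ) : Y → ℝ :=
  fun z => max 0 (min 1 (3 - 4 * dist z x₀ / R))

private lemma cutoff_mem_Icc {Y : Type*} [MetricSpace Y] (x₀ : Y) (R : ℝ) (z : Y) :
    0 ≤ cutoff x₀ R z ∧ cutoff x₀ R z ≤ 1 :=
  ⟨le_max_left _ _, max_le (by norm_num) (min_le_left _ _)⟩

private lemma cutoff_eq_one {Y : Type*} [MetricSpace Y] (x₀ : Y) {R : ℝ} (hR : 0 < R)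
    {z : Y} (hz : dist z x₀ < R / 2) : cutoff x₀ R z = 1 := by
  have h1 : (1:ℝ) ≤ 3 - 4 * dist z x₀ / R := by
    have h2 : 4 * dist z x₀ / R ≤ 2 := by rw [div_le_iff₀ hR]; nlinarith
    linarith
  rw [cutoff, min_eq_left h1, max_eq_right (by norm_num)]

private lemma cutoff_eq_zero {Y : Type*} [MetricSpace Y] (x₀ : Y) {R : ℝ} (hR : 0 < R)
    {z : Y} (hz : 3 * R / 4 ≤ dist z x₀) : cutoff x₀ R z = 0 := by
  have h1 : 3 - 4 * dist z x₀ / R ≤ 0 := by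
    rw [sub_nonpos, le_div_iff₀ hR]
    linarith
  rw [cutoff, max_eq_left (le_trans (min_le_right _ _) h1)]

private lemma abs_min_one_sub {a b : ℝ} : |min 1 a - min 1 b| ≤ |a - b| := by
  rcases le_total a b with h | h <;> rcases le_total (1:ℝ) a with h1 | h1 <;>
    rcases le_total (1:ℝ) b with h2 | h2 <;>
    simp [min_eq_left, min_eq_right, h1, h2, abs_le] <;> constructor <;>
    [skip;skip;skip;skip;skip;skip;skip;skip] <;> cases abs_le.mp (le_refl |a-b|) <;> nlinarith [abs_nonneg (a-b), le_abs_self (a-b), neg_abs_le (a-b)]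

private lemma cutoff_lip {Y : Type*} [MetricSpace Y] (x₀ : Y) {R : ℝ} (hR : 0 < R) (x y : Y) :
    |cutoff x₀ R x - cutoff x₀ R y| ≤ 4 / R * dist x y := by
  have step1 : |cutoff x₀ R x - cutoff x₀ R y|
      ≤ |min 1 (3 - 4 * dist x x₀ / R) - min 1 (3 - 4 * dist y x₀ / R)| := by
    rw [cutoff, cutoff, max_comm 0 _, max_comm 0 _]
    exact abs_max_sub_max_le_abs _ _ _
  have step2 : |min 1 (3 - 4 * dist x x₀ / R) - min 1 (3 - 4 * dist y x₀ / R)|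
      ≤ |(3 - 4 * dist x x₀ / R) - (3 - 4 * dist y x₀ / R)| := abs_min_one_sub
  have step3 : |(3 - 4 * dist x x₀ / R) - (3 - 4 * dist y x₀ / R)|
      = 4 / R * |dist x x₀ - dist y x₀| := by
    have heq : (3 - 4 * dist x x₀ / R) - (3 - 4 * dist y x₀ / R)
        = 4 / R * (dist y x₀ - dist x x₀) := by field_simp; ring
    rw [heq, abs_mul, abs_of_pos (show (0:ℝ) < 4 / R by positivity), abs_sub_comm]
  have step4 : |dist x x₀ - dist y x₀| ≤ dist x y := abs_dist_sub_le x y x₀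
  calc |cutoff x₀ R x - cutoff x₀ R y| ≤ 4 / R * |dist x x₀ - dist y x₀| := by
        rw [← step3]; exact step1.trans step2
    _ ≤ 4 / R * dist x y := by
        have : (0:ℝ) ≤ 4 / R := by positivity
        nlinarith

private lemma setLIntegral_le_const {Y : Type*} [MeasurableSpace Y] (ν : Measure Y)
    (g : Y → ℝ≥0∞) {S : Set Y} (hS : MeasurableSet S) {c : ℝ≥0∞} (h : ∀ y ∈ S, g y ≤ c) :
    ∫⁻ y in S, g y ∂ν ≤ c * ν S := by
  calc ∫⁻ y in S, g y ∂ν = ∫⁻ y, S.indicator g y ∂ν := (lintegral_indicator hS g).symm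
    _ ≤ ∫⁻ y, S.indicator (fun _ => c) y ∂ν := by
        refine lintegral_mono fun y => ?_
        by_cases hy : y ∈ S
        · simpa [Set.indicator_of_mem hy] using h y hy
        · simp [Set.indicator_of_notMem hy]
    _ = c * ν S := by rw [lintegral_indicator hS]; simp

end Cutoff

section PointEnergy
open Metric MeasureTheory Set ENNReal

private noncomputable def cNear (θ p : ℝ) : ℝ := (4:ℝ) ^ p * 2 ^ (θ * p)
private noncomputable def qNear (θ p : ℝ) : ℝ := (1/2:ℝ) ^ p * 2 ^ (θ * p)
private noncomputable def qFar (θ p : ℝ) : ℝ := (1/2:ℝ) ^ (θ * p)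

private noncomputable def KA (θ p Cν : ℝ) : ℝ≥0∞ :=
  ENNReal.ofReal Cν ^ 2 * (ENNReal.ofReal (cNear θ p) * (1 - ENNReal.ofReal (qNear θ p))⁻¹)
    + ENNReal.ofReal Cν ^ 2 * (ENNReal.ofReal (1:ℝ) * (1 - ENNReal.ofReal (qFar θ p))⁻¹)

private lemma qNear_lt_one {θ p : ℝ} (hθ0 : 0 < θ) (hθ1 : θ < 1) (hp : 1 ≤ p) :
    qNear θ p < 1 := by
  have hplt : θ * p < p := by nlinarith
  have h2p : (0:ℝ) < 2 ^ p := Real.rpow_pos_of_pos two_pos _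
  have hlt := Real.rpow_lt_rpow_of_exponent_lt (one_lt_two (α := ℝ)) hplt
  rw [qNear, one_div, Real.inv_rpow two_pos.le]
  calc (2^p : ℝ)⁻¹ * 2 ^ (θ*p) < (2^p : ℝ)⁻¹ * 2 ^ p :=
        mul_lt_mul_of_pos_left hlt (inv_pos.mpr h2p)
    _ = 1 := inv_mul_cancel₀ h2p.ne'

private lemma qFar_lt_one {θ p : ℝ} (hθ0 : 0 < θ) (hp : 1 ≤ p) : qFar θ p < 1 :=
  Real.rpow_lt_one (by norm_num) (by norm_num) (by nlinarith)

private lemma KA_ne_top {θ p Cν : ℝ} (hθ0 : 0 < θ) (hθ1 : θ < 1) (hp : 1 ≤ p) :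
    KA θ p Cν ≠ ∞ := by
  have h1 := inv_one_sub_ne_top (ENNReal.ofReal_lt_one.mpr (qNear_lt_one hθ0 hθ1 hp))
  have h2 := inv_one_sub_ne_top (ENNReal.ofReal_lt_one.mpr (qFar_lt_one hθ0 hp))
  rw [KA]
  exact ENNReal.add_ne_top.mpr
    ⟨ENNReal.mul_ne_top (ENNReal.pow_ne_top ENNReal.ofReal_ne_top)
        (ENNReal.mul_ne_top ENNReal.ofReal_ne_top h1),
      ENNReal.mul_ne_top (ENNReal.pow_ne_top ENNReal.ofReal_ne_top)
        (ENNReal.mul_ne_top ENNReal.ofReal_ne_top h2)⟩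

private lemma real_calc_near {θ p R : ℝ} (hR : 0 < R) (k : ℕ) :
    (4 * (1/2:ℝ)^k) ^ p * R ^ (θ*p)
      = (cNear θ p * qNear θ p ^ k) * (R * (1/2)^(k+1)) ^ (θ*p) := by
  have h2 : (0:ℝ) < 2 ^ (θ*p) := Real.rpow_pos_of_pos two_pos _
  have h12 : ((1/2:ℝ)) ^ (θ*p) = (2 ^ (θ*p))⁻¹ := by
    rw [one_div, Real.inv_rpow two_pos.le]
  rw [cNear, qNear, Real.mul_rpow (by norm_num) (by positivity),
    Real.mul_rpow hR.le (by positivity), pow_rpow_comm (by norm_num) k p,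
    pow_rpow_comm (by norm_num) (k+1) (θ*p), h12, mul_pow]
  field_simp
  simp only [one_div, inv_pow, pow_succ]
  field_simp

private lemma real_calc_far {θ p R : ℝ} (hR : 0 < R) (k : ℕ) :
    (1:ℝ) * R ^ (θ*p) = (1 * qFar θ p ^ k) * ((2:ℝ)^k * R) ^ (θ*p) := by
  have h2 : (0:ℝ) < 2 ^ (θ*p) := Real.rpow_pos_of_pos two_pos _
  have h12 : ((1/2:ℝ)) ^ (θ*p) = (2 ^ (θ*p))⁻¹ := by
    rw [one_div, Real.inv_rpow two_pos.le]
  rw [qFar, Real.mul_rpow (by positivity) hR.le, pow_rpow_comm (by norm_num) k (θ*p), h12]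
  field_simp
  simp only [one_div, inv_pow, pow_succ]
  field_simp

private lemma pointEnergy_bound {Y : Type*} [MetricSpace Y] [MeasurableSpace Y] [BorelSpace Y]
    {ν : Measure Y} {Cν : ℝ} (hD : IsDoublingWith ν Cν) (hB : BallsPosFinite ν)
    {θ p : ℝ} (hθ0 : 0 < θ) (hθ1 : θ < 1) (hp : 1 ≤ p)
    (x₀ : Y) {R : ℝ} (hR : 0 < R) (x : Y) :
    besovPointEnergy ν θ p (cutoff x₀ R) x ≤ KA θ p Cν / ENNReal.ofReal (R ^ (θ * p)) := by
  classical
  have hp0 : 0 < p := lt_of_lt_of_le one_pos hp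
  have hθp : 0 < θ * p := mul_pos hθ0 hp0
  set u := cutoff x₀ R with hu
  set g : Y → ℝ≥0∞ := fun y => if x = y then 0 else
    ENNReal.ofReal (|u x - u y| ^ p) /
      (ENNReal.ofReal (dist x y ^ (θ * p)) * ν (ball x (dist x y))) with hg
  have hPE : besovPointEnergy ν θ p u x = ∫⁻ y, g y ∂ν := by
    rw [besovPointEnergy]
  set N : ℕ → Set Y := fun k => {y | R * (1/2)^(k+1) < dist x y ∧ dist x y ≤ R * (1/2)^k}
    with hN
  set Fs : ℕ → Set Y := fun k => {y | 2^k * R < dist x y ∧ dist x y ≤ 2^(k+1) * R} with hFs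
  have hdistm : Measurable fun y : Y => dist x y := (continuous_const.dist continuous_id).measurable
  have hNmeas : ∀ k, MeasurableSet (N k) := fun k => by
    have : N k = (fun y : Y => dist x y) ⁻¹' (Set.Ioc (R * (1/2)^(k+1)) (R * (1/2)^k)) := rfl
    rw [this]; exact hdistm measurableSet_Ioc
  have hFmeas : ∀ k, MeasurableSet (Fs k) := fun k => by
    have : Fs k = (fun y : Y => dist x y) ⁻¹' (Set.Ioc (2^k * R) (2^(k+1) * R)) := rfl
    rw [this]; exact hdistm measurableSet_Ioc
  -- the integrand vanishes at x
  have hind : g = ({x}ᶜ : Set Y).indicator g := by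
    funext y
    by_cases h : y = x
    · subst h; simp [hg]
    · rw [Set.indicator_of_mem (by simpa using h)]
  have hcover : ({x}ᶜ : Set Y) ⊆ (⋃ k, N k) ∪ ⋃ k, Fs k := by
    intro y hy
    have hyx : y ≠ x := by simpa using hy
    have hd : 0 < dist x y := dist_pos.mpr (Ne.symm hyx)
    rcases le_or_gt (dist x y) R with hle | hgt
    · left
      have hex : ∃ k : ℕ, R * (1/2)^(k+1) < dist x y := by
        obtain ⟨n, hn⟩ := exists_pow_lt_of_lt_one (div_pos hd hR) (by norm_num : (1/2:ℝ) < 1)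
        refine ⟨n, ?_⟩
        have h1 : ((1/2:ℝ))^(n+1) < (1/2)^n :=
          pow_lt_pow_right_of_lt_one₀ (by norm_num) (by norm_num) (Nat.lt_succ_self n)
        rw [mul_comm]
        exact (lt_div_iff₀ hR).mp (lt_trans h1 hn)
      refine mem_iUnion.mpr ⟨Nat.find hex, Nat.find_spec hex, ?_⟩
      rcases Nat.eq_zero_or_pos (Nat.find hex) with hk | hk
      · rw [hk]; simpa using hle
      · have hmin := Nat.find_min hex (Nat.sub_lt hk one_pos)
        have hkk : Nat.find hex - 1 + 1 = Nat.find hex := Nat.succ_pred_eq_of_pos hk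
        rw [hkk] at hmin
        exact not_lt.mp hmin
    · right
      have hex : ∃ k : ℕ, dist x y ≤ 2^(k+1) * R := by
        obtain ⟨n, hn⟩ := pow_unbounded_of_one_lt (dist x y / R) (one_lt_two (α := ℝ))
        refine ⟨n, ?_⟩
        have := (div_lt_iff₀ hR).mp hn
        have h2 : (2:ℝ)^n * R ≤ 2^(n+1) * R := by
          have : (2:ℝ)^n ≤ 2^(n+1) := by
            apply pow_le_pow_right₀ <;> norm_num
          nlinarith
        linarith
      refine mem_iUnion.mpr ⟨Nat.find hex, ?_, Nat.find_spec hex⟩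
      rcases Nat.eq_zero_or_pos (Nat.find hex) with hk | hk
      · rw [hk]; simpa using hgt
      · have hmin := Nat.find_min hex (Nat.sub_lt hk one_pos)
        have hkk : Nat.find hex - 1 + 1 = Nat.find hex := Nat.succ_pred_eq_of_pos hk
        rw [hkk] at hmin
        exact not_le.mp hmin
  -- per-shell bounds
  have hNbound : ∀ k, ∫⁻ y in N k, g y ∂ν
      ≤ ENNReal.ofReal Cν ^ 2 *
        (ENNReal.ofReal (cNear θ p * qNear θ p ^ k) / ENNReal.ofReal (R ^ (θ*p))) := by
    intro k
    set s : ℝ := R * (1/2)^(k+1) with hs_def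
    have hs : 0 < s := by positivity
    have hm := hB x s hs
    have hgb : ∀ y ∈ N k, g y
        ≤ ENNReal.ofReal ((4*(1/2:ℝ)^k) ^ p) / (ENNReal.ofReal (s ^ (θ*p)) * ν (ball x s)) := by
      intro y hy
      obtain ⟨hy1, hy2⟩ := hy
      have hxy : x ≠ y := by
        intro h; rw [h, dist_self] at hy1; exact absurd hy1 (not_lt.mpr hs.le)
      rw [hg]
      simp only [if_neg hxy]
      refine ENNReal.div_le_div ?_ (mul_le_mul'
        (ENNReal.ofReal_le_ofReal (Real.rpow_le_rpow hs.le hy1.le hθp.le))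
        (measure_mono (ball_subset_ball hy1.le)))
      apply ENNReal.ofReal_le_ofReal
      apply Real.rpow_le_rpow (abs_nonneg _) ?_ hp0.le
      calc |u x - u y| ≤ 4 / R * dist x y := cutoff_lip x₀ hR x y
        _ ≤ 4 / R * (R * (1/2)^k) := by
            have h4R : (0:ℝ) ≤ 4 / R := by positivity
            nlinarith
        _ = 4 * (1/2)^k := by field_simp
    have hsub : N k ⊆ ball x (2^2 * s) := by
      intro y hy
      obtain ⟨_, hy2⟩ := hy
      rw [mem_ball, dist_comm]
      have : R * (1/2)^k = 2 * s := by rw [hs_def]; ring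
      calc dist x y ≤ R * (1/2)^k := hy2
        _ < 2^2 * s := by rw [this]; nlinarith
    calc ∫⁻ y in N k, g y ∂ν
        ≤ (ENNReal.ofReal ((4*(1/2:ℝ)^k) ^ p) / (ENNReal.ofReal (s ^ (θ*p)) * ν (ball x s)))
            * ν (N k) := setLIntegral_le_const ν g (hNmeas k) hgb
      _ ≤ (ENNReal.ofReal ((4*(1/2:ℝ)^k) ^ p) / (ENNReal.ofReal (s ^ (θ*p)) * ν (ball x s)))
            * (ENNReal.ofReal Cν ^ 2 * ν (ball x s)) := by
          refine mul_le_mul_right ((measure_mono hsub).trans (ball_two_pow hD x hs 2)) _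
      _ = ENNReal.ofReal Cν ^ 2 *
          ((ENNReal.ofReal ((4*(1/2:ℝ)^k) ^ p) / (ENNReal.ofReal (s ^ (θ*p)) * ν (ball x s)))
            * ν (ball x s)) := by rw [mul_left_comm]
      _ = ENNReal.ofReal Cν ^ 2 *
          (ENNReal.ofReal ((4*(1/2:ℝ)^k) ^ p) / ENNReal.ofReal (s ^ (θ*p))) := by
          rw [cancel_mul_div hm.1.ne' hm.2.ne]
      _ = ENNReal.ofReal Cν ^ 2 *
          (ENNReal.ofReal (cNear θ p * qNear θ p ^ k) / ENNReal.ofReal (R ^ (θ*p))) := by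
          rw [ofReal_div_eq_ofReal_div (Real.rpow_pos_of_pos hs _)
            (Real.rpow_pos_of_pos hR _) (by positivity)
            (mul_nonneg (by unfold cNear; positivity) (pow_nonneg (by unfold qNear; positivity) k))
            (real_calc_near hR k)]
  have hFbound : ∀ k, ∫⁻ y in Fs k, g y ∂ν
      ≤ ENNReal.ofReal Cν ^ 2 *
        (ENNReal.ofReal (1 * qFar θ p ^ k) / ENNReal.ofReal (R ^ (θ*p))) := by
    intro k
    set s : ℝ := 2^k * R with hs_def
    have hs : 0 < s := by positivity
    have hm := hB x s hs
    have hgb : ∀ y ∈ Fs k, g y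
        ≤ ENNReal.ofReal (1:ℝ) / (ENNReal.ofReal (s ^ (θ*p)) * ν (ball x s)) := by
      intro y hy
      obtain ⟨hy1, hy2⟩ := hy
      have hxy : x ≠ y := by
        intro h; rw [h, dist_self] at hy1; exact absurd hy1 (not_lt.mpr hs.le)
      rw [hg]
      simp only [if_neg hxy]
      refine ENNReal.div_le_div ?_ (mul_le_mul'
        (ENNReal.ofReal_le_ofReal (Real.rpow_le_rpow hs.le hy1.le hθp.le))
        (measure_mono (ball_subset_ball hy1.le)))
      apply ENNReal.ofReal_le_ofReal
      have hb1 := cutoff_mem_Icc x₀ R x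
      have hb2 := cutoff_mem_Icc x₀ R y
      have habs : |u x - u y| ≤ 1 := by rw [abs_le]; constructor <;> [linarith [hb1.1, hb2.2]; linarith [hb1.2, hb2.1]]
      exact Real.rpow_le_one (abs_nonneg _) habs hp0.le
    have hsub : Fs k ⊆ ball x (2^2 * s) := by
      intro y hy
      obtain ⟨_, hy2⟩ := hy
      rw [mem_ball, dist_comm]
      have h1 : (2:ℝ)^(k+1) * R = 2 * s := by rw [hs_def]; ring
      calc dist x y ≤ 2^(k+1) * R := hy2
        _ < 2^2 * s := by rw [h1]; nlinarith
    calc ∫⁻ y in Fs k, g y ∂ν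
        ≤ (ENNReal.ofReal (1:ℝ) / (ENNReal.ofReal (s ^ (θ*p)) * ν (ball x s)))
            * ν (Fs k) := setLIntegral_le_const ν g (hFmeas k) hgb
      _ ≤ (ENNReal.ofReal (1:ℝ) / (ENNReal.ofReal (s ^ (θ*p)) * ν (ball x s)))
            * (ENNReal.ofReal Cν ^ 2 * ν (ball x s)) := by
          refine mul_le_mul_right ((measure_mono hsub).trans (ball_two_pow hD x hs 2)) _
      _ = ENNReal.ofReal Cν ^ 2 *
          ((ENNReal.ofReal (1:ℝ) / (ENNReal.ofReal (s ^ (θ*p)) * ν (ball x s)))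
            * ν (ball x s)) := by rw [mul_left_comm]
      _ = ENNReal.ofReal Cν ^ 2 *
          (ENNReal.ofReal (1:ℝ) / ENNReal.ofReal (s ^ (θ*p))) := by
          rw [cancel_mul_div hm.1.ne' hm.2.ne]
      _ = ENNReal.ofReal Cν ^ 2 *
          (ENNReal.ofReal (1 * qFar θ p ^ k) / ENNReal.ofReal (R ^ (θ*p))) := by
          rw [ofReal_div_eq_ofReal_div (Real.rpow_pos_of_pos hs _)
            (Real.rpow_pos_of_pos hR _) (by norm_num)
            (mul_nonneg (by norm_num) (pow_nonneg (by unfold qFar; positivity) k))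
            (real_calc_far hR k)]
  calc besovPointEnergy ν θ p u x = ∫⁻ y, g y ∂ν := hPE
    _ = ∫⁻ y in ({x}ᶜ : Set Y), g y ∂ν := by
        rw [← lintegral_indicator (MeasurableSet.singleton x).compl, ← hind]
    _ ≤ ∫⁻ y in (⋃ k, N k) ∪ ⋃ k, Fs k, g y ∂ν := lintegral_mono_set hcover
    _ ≤ (∫⁻ y in ⋃ k, N k, g y ∂ν) + ∫⁻ y in ⋃ k, Fs k, g y ∂ν := lintegral_union_le _ _ _
    _ ≤ (∑' k, ∫⁻ y in N k, g y ∂ν) + ∑' k, ∫⁻ y in Fs k, g y ∂ν :=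
        add_le_add (lintegral_iUnion_le _ _) (lintegral_iUnion_le _ _)
    _ ≤ (∑' k, ENNReal.ofReal Cν ^ 2 *
            (ENNReal.ofReal (cNear θ p * qNear θ p ^ k) / ENNReal.ofReal (R ^ (θ*p))))
        + ∑' k, ENNReal.ofReal Cν ^ 2 *
            (ENNReal.ofReal (1 * qFar θ p ^ k) / ENNReal.ofReal (R ^ (θ*p))) :=
        add_le_add (ENNReal.tsum_le_tsum hNbound) (ENNReal.tsum_le_tsum hFbound)
    _ = KA θ p Cν / ENNReal.ofReal (R ^ (θ * p)) := by
        rw [ENNReal.tsum_mul_left, ENNReal.tsum_mul_left,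
          tsum_ofReal_geom_div _ _ (by unfold cNear; positivity) (by unfold qNear; positivity),
          tsum_ofReal_geom_div _ _ (by norm_num) (by unfold qFar; positivity), KA,
          ENNReal.add_div]
        congr 1 <;> (simp only [div_eq_mul_inv]; ring)
end PointEnergy

section EnergyUpper
open Metric MeasureTheory Set ENNReal

private noncomputable def KU (θ p Cν : ℝ) : ℝ≥0∞ :=
  ENNReal.ofReal Cν ^ 3 * KA θ p Cν
    + ENNReal.ofReal Cν ^ 6 * (1 - ENNReal.ofReal (qFar θ p))⁻¹

private lemma KU_ne_top {θ p Cν : ℝ} (hθ0 : 0 < θ) (hθ1 : θ < 1) (hp : 1 ≤ p) :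
    KU θ p Cν ≠ ∞ := by
  have h2 := inv_one_sub_ne_top (ENNReal.ofReal_lt_one.mpr (qFar_lt_one hθ0 hp))
  exact ENNReal.add_ne_top.mpr
    ⟨ENNReal.mul_ne_top (ENNReal.pow_ne_top ENNReal.ofReal_ne_top) (KA_ne_top hθ0 hθ1 hp),
      ENNReal.mul_ne_top (ENNReal.pow_ne_top ENNReal.ofReal_ne_top) h2⟩

private lemma energy_upper {Y : Type*} [MetricSpace Y] [MeasurableSpace Y] [BorelSpace Y]
    {ν : Measure Y} {Cν : ℝ} (hC : 1 < Cν) (hD : IsDoublingWith ν Cν) (hB : BallsPosFinite ν)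
    {θ p : ℝ} (hθ0 : 0 < θ) (hθ1 : θ < 1) (hp : 1 ≤ p)
    (x₀ : Y) {R : ℝ} (hR : 0 < R) :
    besovEnergy ν θ p (cutoff x₀ R)
      ≤ KU θ p Cν * (ν (ball x₀ R) / ENNReal.ofReal (R ^ (θ * p))) := by
  classical
  have hp0 : 0 < p := lt_of_lt_of_le one_pos hp
  have hθp : 0 < θ * p := mul_pos hθ0 hp0
  set u := cutoff x₀ R with hu
  set PE : Y → ℝ≥0∞ := fun x => besovPointEnergy ν θ p u x with hPEdef
  set eR := ENNReal.ofReal (R ^ (θ * p)) with heR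
  set νB := ν (ball x₀ R) with hνB
  set T : ℕ → Set Y := fun j => {x | 2^(j+1) * R < dist x x₀ ∧ dist x x₀ ≤ 2^(j+2) * R} with hT
  have hdm : Measurable fun x : Y => dist x x₀ := (continuous_id.dist continuous_const).measurable
  have hTmeas : ∀ j, MeasurableSet (T j) := fun j => by
    have : T j = (fun x : Y => dist x x₀) ⁻¹' (Set.Ioc (2^(j+1) * R) (2^(j+2) * R)) := rfl
    rw [this]; exact hdm measurableSet_Ioc
  -- coverage
  have hcover : (univ : Set Y) ⊆ closedBall x₀ (4*R) ∪ ⋃ j, T j := by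
    intro x _
    rcases le_or_gt (dist x x₀) (4*R) with hle | hgt
    · exact Or.inl (mem_closedBall.mpr hle)
    · right
      have hex : ∃ j : ℕ, dist x x₀ ≤ 2^(j+2) * R := by
        obtain ⟨n, hn⟩ := pow_unbounded_of_one_lt (dist x x₀ / R) (one_lt_two (α := ℝ))
        have h1 := (div_lt_iff₀ hR).mp hn
        have h2 : (2:ℝ)^n ≤ 2^(n+2) := by
          apply pow_le_pow_right₀ <;> norm_num
        exact ⟨n, by nlinarith⟩
      refine mem_iUnion.mpr ⟨Nat.find hex, ?_, Nat.find_spec hex⟩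
      rcases Nat.eq_zero_or_pos (Nat.find hex) with hk | hk
      · rw [hk]; norm_num; nlinarith
      · have hmin := Nat.find_min hex (Nat.sub_lt hk one_pos)
        have hkk : Nat.find hex - 1 + 2 = Nat.find hex + 1 := by omega
        rw [hkk] at hmin
        exact not_le.mp hmin
  -- bound on shells
  have hTbound : ∀ j, ∫⁻ x in T j, PE x ∂ν
      ≤ ENNReal.ofReal Cν ^ 6 * νB * (ENNReal.ofReal (1 * qFar θ p ^ j) / eR) := by
    intro j
    set s : ℝ := 2^j * R with hs_def
    have hs : 0 < s := by positivity
    have h2j : (1:ℝ) ≤ 2^j := one_le_pow₀ (by norm_num)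
    have hMj := hB x₀ s hs
    set Mj := ν (ball x₀ s) with hMjdef
    -- pointwise bound on T j
    have hPT : ∀ x ∈ T j, PE x ≤
        ENNReal.ofReal Cν ^ 3 * (νB / (ENNReal.ofReal (s ^ (θ*p)) * Mj)) := by
      intro x hx
      obtain ⟨hx1, hx2⟩ := hx
      have h2e : (2:ℝ)^(j+1) = 2 * 2^j := by ring
      have hux : u x = 0 := cutoff_eq_zero x₀ hR (by nlinarith [h2j, hx1])
      set g : Y → ℝ≥0∞ := fun y => if x = y then 0 else
        ENNReal.ofReal (|u x - u y| ^ p) /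
          (ENNReal.ofReal (dist x y ^ (θ * p)) * ν (ball x (dist x y))) with hg
      have hPE2 : PE x = ∫⁻ y, g y ∂ν := by
        show besovPointEnergy ν θ p u x = _
        rw [besovPointEnergy]
      have hind : g = (ball x₀ (3*R/4)).indicator g := by
        funext y
        by_cases hy : y ∈ ball x₀ (3*R/4)
        · rw [Set.indicator_of_mem hy]
        · rw [Set.indicator_of_notMem hy, hg]
          by_cases hxy : x = y
          · simp [hxy]
          · have huy : u y = 0 := cutoff_eq_zero x₀ hR (not_lt.mp (fun h => hy (mem_ball.mpr h)))
            simp only [if_neg hxy, hux, huy, sub_zero, abs_zero, Real.zero_rpow hp0.ne',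
              ENNReal.ofReal_zero, ENNReal.zero_div]
      have hgb : ∀ y ∈ ball x₀ (3*R/4), g y
          ≤ 1 / (ENNReal.ofReal (s ^ (θ*p)) * ν (ball x s)) := by
        intro y hy
        rw [hg]
        by_cases hxy : x = y
        · simp [hxy]
        · simp only [if_neg hxy]
          have hdy : dist y x₀ < 3*R/4 := mem_ball.mp hy
          have hdxy : s ≤ dist x y := by
            have htri : dist x x₀ ≤ dist x y + dist y x₀ := dist_triangle x y x₀
            have h2 : (2:ℝ)^(j+1) = 2 * 2^j := by ring
            nlinarith
          calc ENNReal.ofReal (|u x - u y| ^ p) /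
                (ENNReal.ofReal (dist x y ^ (θ * p)) * ν (ball x (dist x y)))
              ≤ ENNReal.ofReal (1:ℝ) / (ENNReal.ofReal (s ^ (θ*p)) * ν (ball x s)) := by
                refine ENNReal.div_le_div ?_ (mul_le_mul'
                  (ENNReal.ofReal_le_ofReal (Real.rpow_le_rpow hs.le hdxy hθp.le))
                  (measure_mono (ball_subset_ball hdxy)))
                apply ENNReal.ofReal_le_ofReal
                have hb1 := cutoff_mem_Icc x₀ R x
                have hb2 := cutoff_mem_Icc x₀ R y
                have habs : |u x - u y| ≤ 1 := by
                  rw [abs_le]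
                  constructor <;> [linarith [hb1.1, hb2.2]; linarith [hb1.2, hb2.1]]
                exact Real.rpow_le_one (abs_nonneg _) habs hp0.le
            _ = 1 / (ENNReal.ofReal (s ^ (θ*p)) * ν (ball x s)) := by rw [ENNReal.ofReal_one]
      have hcomp : Mj ≤ ENNReal.ofReal Cν ^ 3 * ν (ball x s) := by
        have hsub2 : ball x₀ s ⊆ ball x (2^3 * s) := by
          intro y hy
          rw [mem_ball] at hy ⊢
          have htri : dist y x ≤ dist y x₀ + dist x₀ x := dist_triangle y x₀ x
          have hc : dist x₀ x = dist x x₀ := dist_comm x₀ x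
          have h4 : (2:ℝ)^(j+2) = 4 * 2^j := by ring
          nlinarith
        exact (measure_mono hsub2).trans (ball_two_pow hD x hs 3)
      calc PE x = ∫⁻ y, g y ∂ν := hPE2
        _ = ∫⁻ y in ball x₀ (3*R/4), g y ∂ν := by
            rw [← lintegral_indicator measurableSet_ball, ← hind]
        _ ≤ (1 / (ENNReal.ofReal (s ^ (θ*p)) * ν (ball x s))) * ν (ball x₀ (3*R/4)) :=
            setLIntegral_le_const ν g measurableSet_ball hgb
        _ ≤ (1 / (ENNReal.ofReal (s ^ (θ*p)) * ν (ball x s))) * νB :=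
            mul_le_mul_right (measure_mono (ball_subset_ball (by linarith))) _
        _ ≤ (ENNReal.ofReal Cν ^ 3 * (1 / (ENNReal.ofReal (s ^ (θ*p)) * Mj))) * νB := by
            refine mul_le_mul_left (div_le_K_mul_div ?_ ?_ hcomp) _
            · exact pow_ne_zero 3 (ENNReal.ofReal_pos.mpr (by linarith)).ne'
            · exact ENNReal.pow_ne_top ENNReal.ofReal_ne_top
        _ = ENNReal.ofReal Cν ^ 3 * (νB / (ENNReal.ofReal (s ^ (θ*p)) * Mj)) := by
            simp only [div_eq_mul_inv]; ring
    calc ∫⁻ x in T j, PE x ∂ν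
        ≤ (ENNReal.ofReal Cν ^ 3 * (νB / (ENNReal.ofReal (s ^ (θ*p)) * Mj))) * ν (T j) :=
          setLIntegral_le_const ν PE (hTmeas j) hPT
      _ ≤ (ENNReal.ofReal Cν ^ 3 * (νB / (ENNReal.ofReal (s ^ (θ*p)) * Mj)))
            * (ENNReal.ofReal Cν ^ 3 * Mj) := by
          refine mul_le_mul_right ?_ _
          have hsub3 : T j ⊆ ball x₀ (2^3 * s) := by
            intro x hx
            obtain ⟨_, hx2⟩ := hx
            rw [mem_ball]
            have h4 : (2:ℝ)^(j+2) = 4 * 2^j := by ring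
            nlinarith
          exact (measure_mono hsub3).trans (ball_two_pow hD x₀ hs 3)
      _ = ENNReal.ofReal Cν ^ 6 * ((νB / (ENNReal.ofReal (s ^ (θ*p)) * Mj)) * Mj) := by
          simp only [div_eq_mul_inv]; ring
      _ = ENNReal.ofReal Cν ^ 6 * (νB / ENNReal.ofReal (s ^ (θ*p))) := by
          rw [cancel_mul_div hMj.1.ne' hMj.2.ne]
      _ = ENNReal.ofReal Cν ^ 6 * νB * (ENNReal.ofReal (1 * qFar θ p ^ j) / eR) := by
          have h1 : (ENNReal.ofReal (1:ℝ)) / ENNReal.ofReal (s ^ (θ*p))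
              = ENNReal.ofReal (1 * qFar θ p ^ j) / eR := by
            rw [heR]
            exact ofReal_div_eq_ofReal_div (Real.rpow_pos_of_pos hs _)
              (Real.rpow_pos_of_pos hR _) (by norm_num)
              (mul_nonneg (by norm_num) (pow_nonneg (by unfold qFar; positivity) j))
              (real_calc_far hR j)
          rw [ENNReal.ofReal_one] at h1
          rw [div_eq_mul_inv, div_eq_mul_inv] at h1 ⊢
          calc ENNReal.ofReal Cν ^ 6 * (νB * (ENNReal.ofReal (s ^ (θ*p)))⁻¹)
              = ENNReal.ofReal Cν ^ 6 * νB * (1 * (ENNReal.ofReal (s ^ (θ*p)))⁻¹) := by ring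
            _ = _ := by first | (rw [h1]; ring) | rw [h1]
  -- combine
  calc besovEnergy ν θ p u = ∫⁻ x in (univ : Set Y), PE x ∂ν := by
        rw [besovEnergy, setLIntegral_univ]
    _ ≤ ∫⁻ x in closedBall x₀ (4*R) ∪ ⋃ j, T j, PE x ∂ν := lintegral_mono_set hcover
    _ ≤ (∫⁻ x in closedBall x₀ (4*R), PE x ∂ν) + ∫⁻ x in ⋃ j, T j, PE x ∂ν :=
        lintegral_union_le _ _ _
    _ ≤ (KA θ p Cν / eR) * ν (closedBall x₀ (4*R))
          + ∑' j, ∫⁻ x in T j, PE x ∂ν := by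
        refine add_le_add (setLIntegral_le_const ν PE measurableSet_closedBall
          (fun x _ => pointEnergy_bound hD hB hθ0 hθ1 hp x₀ hR x)) (lintegral_iUnion_le _ _)
    _ ≤ (KA θ p Cν / eR) * (ENNReal.ofReal Cν ^ 3 * νB)
          + ∑' j, ENNReal.ofReal Cν ^ 6 * νB * (ENNReal.ofReal (1 * qFar θ p ^ j) / eR) := by
        refine add_le_add (mul_le_mul_right ?_ _) (ENNReal.tsum_le_tsum hTbound)
        refine le_trans (measure_mono ?_) (ball_two_pow hD x₀ hR 3)
        intro y hy
        rw [mem_ball]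
        have := mem_closedBall.mp hy
        nlinarith
    _ = KU θ p Cν * (νB / eR) := by
        rw [ENNReal.tsum_mul_left, tsum_ofReal_geom_div _ _ (by norm_num)
          (by unfold qFar; positivity), KU, ENNReal.ofReal_one]
        simp only [div_eq_mul_inv]
        ring

end EnergyUpper

section Lower
open Metric MeasureTheory Set ENNReal

private lemma const_le_lintegral {Y : Type*} [MeasurableSpace Y] (ν : Measure Y)
    (g : Y → ℝ≥0∞) {S : Set Y} (hS : MeasurableSet S) {c : ℝ≥0∞} (h : ∀ y ∈ S, c ≤ g y) :
    c * ν S ≤ ∫⁻ y, g y ∂ν := by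
  calc c * ν S = ∫⁻ y, S.indicator (fun _ => c) y ∂ν := by
        rw [lintegral_indicator hS]; simp
    _ ≤ ∫⁻ y, g y ∂ν := by
        refine lintegral_mono fun y => ?_
        by_cases hy : y ∈ S
        · simpa [Set.indicator_of_mem hy] using h y hy
        · simp [Set.indicator_of_notMem hy]

private lemma cutoff_admissible {Y : Type*} [MetricSpace Y] [MeasurableSpace Y]
    [BorelSpace Y] [CompleteSpace Y] {ν : Measure Y} {Cν : ℝ}
    (hD : IsDoublingWith ν Cν) (hB : BallsPosFinite ν)
    (x₀ : Y) {r R : ℝ} (hr : 0 < r) (h2r : 2*r ≤ R) :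
    condAdmissible (ball x₀ r) (ball x₀ R) (cutoff x₀ R) := by
  have hR : 0 < R := by linarith
  have hsub : tsupport (cutoff x₀ R) ⊆ closedBall x₀ (3*R/4) := by
    apply closure_minimal ?_ Metric.isClosed_closedBall
    intro z hz
    rw [Function.mem_support] at hz
    rw [mem_closedBall]
    by_contra h
    exact hz (cutoff_eq_zero x₀ hR (le_of_lt (not_le.mp h)))
  refine ⟨cutoff_mem_Icc x₀ R,
    ⟨ball x₀ (R/2), isOpen_ball, ball_subset_ball (by linarith),
      fun z hz => cutoff_eq_one x₀ hR (mem_ball.mp hz)⟩,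
    (compact_closedBall_of_doubling hD hB x₀ (3*R/4)).of_isClosed_subset
      (isClosed_tsupport _) hsub,
    hsub.trans (closedBall_subset_ball (by linarith))⟩

private lemma energy_lower {Y : Type*} [MetricSpace Y] [MeasurableSpace Y] [BorelSpace Y]
    {ν : Measure Y} {Cν κ : ℝ} (hC : 1 < Cν) (hκ : 1 < κ)
    (hD : IsDoublingWith ν Cν) (hB : BallsPosFinite ν)
    {θ p : ℝ} (hθ0 : 0 < θ) (hθ1 : θ < 1) (hp : 1 ≤ p)
    (x₀ : Y) (hUP : UnifPerfectAt x₀ κ)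
    {r R : ℝ} (hr : 0 < r) (h2r : 2*r ≤ R)
    {n₁ n₂ n₃ : ℕ} (hn₁ : 5*κ ≤ 2^n₁) (hn₂ : 12*κ ≤ 2^n₂) (hn₃ : R ≤ 2^n₃ * r)
    (hne : ball x₀ (2*R) ≠ univ)
    (u : Y → ℝ) (hadm : condAdmissible (ball x₀ r) (ball x₀ R) u) :
    ν (ball x₀ R) / ENNReal.ofReal (R^(θ*p))
      ≤ (ENNReal.ofReal ((4*κ)^(θ*p)) * ENNReal.ofReal Cν ^ (n₁+n₂+n₃))
          * besovEnergy ν θ p u := by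
  classical
  have hR : 0 < R := by linarith
  have hp0 : 0 < p := lt_of_lt_of_le one_pos hp
  have hθp : 0 < θ * p := mul_pos hθ0 hp0
  -- find the far point z
  obtain ⟨z, hz1, hz2⟩ : ∃ z : Y, 3/2*R ≤ dist z x₀ ∧ dist z x₀ < 3/2*κ*R := by
    by_cases hcase : ball x₀ (κ * (3/2*R)) = univ
    · obtain ⟨w, hw⟩ := (Set.ne_univ_iff_exists_notMem _).mp hne
      refine ⟨w, ?_, ?_⟩
      · have h1 : ¬ dist w x₀ < 2*R := fun h => hw (mem_ball.mpr h)
        linarith [not_lt.mp h1]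
      · have h2 : w ∈ ball x₀ (κ * (3/2*R)) := hcase ▸ mem_univ w
        have := mem_ball.mp h2
        linarith
    · obtain ⟨z, hz⟩ := hUP (3/2*R) (by linarith) hcase
      obtain ⟨hza, hzb⟩ := hz
      refine ⟨z, ?_, ?_⟩
      · rw [mem_ball] at hzb; linarith [not_lt.mp hzb]
      · have := mem_ball.mp hza; linarith
  obtain ⟨hu01, ⟨G, hGopen, hGsub, hG1⟩, hsupp_cpt, hsupp⟩ := hadm
  have hu1 : ∀ x ∈ ball x₀ r, u x = 1 := fun x hx => hG1 x (hGsub hx)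
  have hu0 : ∀ y, y ∉ ball x₀ R → u y = 0 :=
    fun y hy => image_eq_zero_of_notMem_tsupport (fun h => hy (hsupp h))
  have hB2u : ∀ y ∈ ball z (R/4), u y = 0 := by
    intro y hy
    apply hu0
    rw [mem_ball]
    have h1 : dist y z < R/4 := mem_ball.mp hy
    have h2 : dist z x₀ ≤ dist z y + dist y x₀ := dist_triangle z y x₀
    have h3 : dist z y = dist y z := dist_comm z y
    intro h4
    linarith
  -- notation
  set D := ENNReal.ofReal Cν with hDdef
  have hD0 : D ≠ 0 := (ENNReal.ofReal_pos.mpr (by linarith)).ne'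
  set νB := ν (ball x₀ R) with hνBdef
  have hνB := hB x₀ R hR
  set eR := ENNReal.ofReal (R^(θ*p)) with heRdef
  have heR0 : eR ≠ 0 := (ENNReal.ofReal_pos.mpr (Real.rpow_pos_of_pos hR _)).ne'
  have heRt : eR ≠ ∞ := ENNReal.ofReal_ne_top
  set A := ENNReal.ofReal ((4*κ*R)^(θ*p)) with hAdef
  set W := A * (D^n₁ * νB) with hWdef
  have hA0 : A ≠ 0 := (ENNReal.ofReal_pos.mpr (Real.rpow_pos_of_pos (by linarith) _)).ne'
  have hW0 : W ≠ 0 := by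
    rw [hWdef]
    exact mul_ne_zero hA0 (mul_ne_zero (pow_ne_zero _ hD0) hνB.1.ne')
  have hWt : W ≠ ∞ := by
    rw [hWdef]
    exact ENNReal.mul_ne_top ENNReal.ofReal_ne_top
      (ENNReal.mul_ne_top (ENNReal.pow_ne_top ENNReal.ofReal_ne_top) hνB.2.ne)
  have hνB2 := hB z (R/4) (by linarith)
  have hνBr := hB x₀ r hr
  -- pointwise lower bound for x in the small ball
  have hPE : ∀ x ∈ ball x₀ r, (1/W) * ν (ball z (R/4)) ≤ besovPointEnergy ν θ p u x := by
    intro x hx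
    have hux : u x = 1 := hu1 x hx
    have hdx : dist x x₀ < r := mem_ball.mp hx
    rw [besovPointEnergy]
    refine const_le_lintegral ν _ measurableSet_ball ?_
    intro y hy
    have huy : u y = 0 := hB2u y hy
    have hxy : x ≠ y := by
      intro h; rw [← h, hux] at huy; exact one_ne_zero huy
    rw [if_neg hxy]
    have hd4 : dist x y < 4*κ*R := by
      have h1 := dist_triangle4 x x₀ z y
      have h2 : dist x₀ z = dist z x₀ := dist_comm x₀ z
      have h3 : dist z y = dist y z := dist_comm z y
      have h4 : dist y z < R/4 := mem_ball.mp hy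
      nlinarith
    have hnum : ENNReal.ofReal (|u x - u y| ^ p) = 1 := by
      rw [hux, huy]
      norm_num
    have hden : ENNReal.ofReal (dist x y ^ (θ * p)) * ν (ball x (dist x y)) ≤ W := by
      rw [hWdef]
      refine mul_le_mul' (ENNReal.ofReal_le_ofReal
        (Real.rpow_le_rpow dist_nonneg hd4.le hθp.le)) ?_
      have hsub2 : ball x (dist x y) ⊆ ball x₀ (2^n₁ * R) := by
        intro w hw
        rw [mem_ball] at hw ⊢
        have h5 : dist w x₀ ≤ dist w x + dist x x₀ := dist_triangle w x x₀
        have h6 : (1:ℝ) < κ := hκ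
        nlinarith
      exact (measure_mono hsub2).trans (ball_two_pow hD x₀ hR n₁)
    rw [hnum]
    exact ENNReal.div_le_div (le_refl 1) hden
  -- integrate over the small ball
  have hE : (1/W) * (ν (ball z (R/4)) * ν (ball x₀ r)) ≤ besovEnergy ν θ p u := by
    rw [besovEnergy, ← mul_assoc]
    exact const_le_lintegral ν _ measurableSet_ball hPE
  -- comparisons of measures
  have hcmp2 : νB ≤ D^n₂ * ν (ball z (R/4)) := by
    have hsub3 : ball x₀ R ⊆ ball z (2^n₂ * (R/4)) := by
      intro w hw
      rw [mem_ball] at hw ⊢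
      have h5 : dist w z ≤ dist w x₀ + dist x₀ z := dist_triangle w x₀ z
      have h6 : dist x₀ z = dist z x₀ := dist_comm x₀ z
      nlinarith
    exact (measure_mono hsub3).trans (ball_two_pow hD z (by linarith) n₂)
  have hcmp3 : νB ≤ D^n₃ * ν (ball x₀ r) := ball_le_of_le hD x₀ hr (by linarith)
  -- A = ofReal((4κ)^θp) * eR
  have hAeq : A = ENNReal.ofReal ((4*κ)^(θ*p)) * eR := by
    rw [hAdef, heRdef, ← ENNReal.ofReal_mul (by positivity)]
    congr 1
    rw [← Real.mul_rpow (by linarith) hR.le]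
  -- main multiplicative inequality
  have hmul : W * νB ≤ (ENNReal.ofReal ((4*κ)^(θ*p)) * D^(n₁+n₂+n₃)
      * (ν (ball z (R/4)) * ν (ball x₀ r))) * eR := by
    calc W * νB = A * D^n₁ * (νB * νB) := by rw [hWdef]; ring
      _ ≤ A * D^n₁ * ((D^n₂ * ν (ball z (R/4))) * (D^n₃ * ν (ball x₀ r))) :=
          mul_le_mul_right (mul_le_mul' hcmp2 hcmp3) _
      _ = (ENNReal.ofReal ((4*κ)^(θ*p)) * D^(n₁+n₂+n₃)
            * (ν (ball z (R/4)) * ν (ball x₀ r))) * eR := by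
          rw [hAeq, pow_add, pow_add]
          ring
  -- conclude
  rw [ENNReal.div_le_iff heR0 heRt]
  calc νB = νB * (W * W⁻¹) := by rw [ENNReal.mul_inv_cancel hW0 hWt, mul_one]
    _ = (W * νB) * W⁻¹ := by ring
    _ ≤ ((ENNReal.ofReal ((4*κ)^(θ*p)) * D^(n₁+n₂+n₃)
          * (ν (ball z (R/4)) * ν (ball x₀ r))) * eR) * W⁻¹ := mul_le_mul_left hmul _
    _ = (ENNReal.ofReal ((4*κ)^(θ*p)) * D^(n₁+n₂+n₃)
          * ((1/W) * (ν (ball z (R/4)) * ν (ball x₀ r)))) * eR := by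
        rw [one_div]; ring
    _ ≤ (ENNReal.ofReal ((4*κ)^(θ*p)) * D^(n₁+n₂+n₃) * besovEnergy ν θ p u) * eR :=
        mul_le_mul_left (mul_le_mul_right hE _) _

end Lower


theorem stmt18 (θ p κ Cν Θ : ℝ) (hθ0 : 0 < θ) (hθ1 : θ < 1) (hp : 1 ≤ p)
    (hκ : 1 < κ) (hC : 1 < Cν) (hΘ0 : 0 < Θ) (hΘ1 : Θ < 1) :
    ∃ C : ℝ, 0 < C ∧
      ∀ (Y : Type u) [MetricSpace Y] [MeasurableSpace Y] [BorelSpace Y] [CompleteSpace Y]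
        (ν : Measure Y), IsDoublingWith ν Cν → BallsPosFinite ν →
        ∀ x₀ : Y, UnifPerfectAt x₀ κ →
        ∀ r R : ℝ, 0 < Θ * R → Θ * R ≤ 2 * r → 2 * r ≤ R → ball x₀ (2 * R) ≠ univ →
          (besovCondCap ν θ p (ball x₀ r) (ball x₀ R) ≤
              ENNReal.ofReal C * (ν (ball x₀ r) / ENNReal.ofReal (r ^ (θ * p))) ∧
            ν (ball x₀ r) / ENNReal.ofReal (r ^ (θ * p)) ≤
              ENNReal.ofReal C * besovCondCap ν θ p (ball x₀ r) (ball x₀ R)) ∧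
          (besovCondCap ν θ p (ball x₀ r) (ball x₀ R) ≤
              ENNReal.ofReal C * (ν (ball x₀ R) / ENNReal.ofReal (R ^ (θ * p))) ∧
            ν (ball x₀ R) / ENNReal.ofReal (R ^ (θ * p)) ≤
              ENNReal.ofReal C * besovCondCap ν θ p (ball x₀ r) (ball x₀ R)) := by
  have hp0 : 0 < p := lt_of_lt_of_le one_pos hp
  have hθp : 0 < θ * p := mul_pos hθ0 hp0
  obtain ⟨n₁, hn₁⟩ := pow_unbounded_of_one_lt (5*κ) (one_lt_two (α := ℝ))
  obtain ⟨n₂, hn₂⟩ := pow_unbounded_of_one_lt (12*κ) (one_lt_two (α := ℝ))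
  obtain ⟨n₃, hn₃⟩ := pow_unbounded_of_one_lt (2/Θ) (one_lt_two (α := ℝ))
  set KL : ℝ≥0∞ := ENNReal.ofReal ((4*κ)^(θ*p)) * ENNReal.ofReal Cν ^ (n₁+n₂+n₃) with hKLdef
  set Kq : ℝ≥0∞ := ENNReal.ofReal ((2/Θ)^(θ*p)) with hKqdef
  have hKL0 : KL ≠ 0 := mul_ne_zero
    (ENNReal.ofReal_pos.mpr (Real.rpow_pos_of_pos (by linarith) _)).ne'
    (pow_ne_zero _ (ENNReal.ofReal_pos.mpr (by linarith)).ne')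
  have hKLt : KL ≠ ∞ := ENNReal.mul_ne_top ENNReal.ofReal_ne_top
    (ENNReal.pow_ne_top ENNReal.ofReal_ne_top)
  have hKq0 : Kq ≠ 0 := (ENNReal.ofReal_pos.mpr
    (Real.rpow_pos_of_pos (by positivity) _)).ne'
  have hKqt : Kq ≠ ∞ := ENNReal.ofReal_ne_top
  set Dn : ℝ≥0∞ := ENNReal.ofReal Cν ^ n₃ with hDndef
  set K : ℝ≥0∞ := (1 + KU θ p Cν + KL) * (1 + Dn + Kq) with hKdef
  have hKt : K ≠ ∞ := ENNReal.mul_ne_top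
    (by
      refine ENNReal.add_ne_top.mpr ⟨ENNReal.add_ne_top.mpr ⟨ENNReal.one_ne_top, ?_⟩, hKLt⟩
      exact KU_ne_top hθ0 hθ1 hp)
    (ENNReal.add_ne_top.mpr ⟨ENNReal.add_ne_top.mpr
      ⟨ENNReal.one_ne_top, ENNReal.pow_ne_top ENNReal.ofReal_ne_top⟩, hKqt⟩)
  have hK1 : 1 ≤ K := by
    calc (1:ℝ≥0∞) = 1 * 1 := (one_mul 1).symm
      _ ≤ K := mul_le_mul' (le_self_add.trans le_self_add) (le_self_add.trans le_self_add)
  refine ⟨K.toReal, ENNReal.toReal_pos (by intro h; rw [h] at hK1; simp at hK1) hKt, ?_⟩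
  intro Y _ _ _ _ ν hD hB x₀ hUP r R hΘR hΘr h2r hne
  have hofC : ENNReal.ofReal K.toReal = K := ENNReal.ofReal_toReal hKt
  have hR : 0 < R := by
    by_contra h
    push_neg at h
    nlinarith
  have hr : 0 < r := by nlinarith
  have hrR : r ≤ R := by linarith
  have hRr : R ≤ 2^n₃ * r := by
    have h1 : R ≤ (2/Θ) * r := by
      rw [div_mul_eq_mul_div, le_div_iff₀ hΘ0]
      nlinarith
    nlinarith [hn₃, hr]
  -- upper bound
  have hadm := cutoff_admissible hD hB x₀ hr h2r
  have hU : besovCondCap ν θ p (ball x₀ r) (ball x₀ R)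
      ≤ KU θ p Cν * (ν (ball x₀ R) / ENNReal.ofReal (R ^ (θ * p))) := by
    refine le_trans ?_ (energy_upper hC hD hB hθ0 hθ1 hp x₀ hR)
    rw [besovCondCap]
    exact iInf₂_le _ hadm
  -- lower bound
  have hL : ν (ball x₀ R) / ENNReal.ofReal (R ^ (θ * p))
      ≤ KL * besovCondCap ν θ p (ball x₀ r) (ball x₀ R) := by
    have h1 : ν (ball x₀ R) / ENNReal.ofReal (R ^ (θ * p)) / KL
        ≤ besovCondCap ν θ p (ball x₀ r) (ball x₀ R) := by
      rw [besovCondCap]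
      refine le_iInf₂ fun u hu => ?_
      exact ENNReal.div_le_of_le_mul'
        (energy_lower hC hκ hD hB hθ0 hθ1 hp x₀ hUP hr h2r hn₁.le hn₂.le hRr hne u hu)
    calc ν (ball x₀ R) / ENNReal.ofReal (R ^ (θ * p))
        = KL * (ν (ball x₀ R) / ENNReal.ofReal (R ^ (θ * p)) / KL) :=
          (ENNReal.mul_div_cancel hKL0 hKLt).symm
      _ ≤ KL * besovCondCap ν θ p (ball x₀ r) (ball x₀ R) := mul_le_mul_right h1 _
  -- cross comparisons
  have hX1 : ν (ball x₀ R) / ENNReal.ofReal (R ^ (θ * p))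
      ≤ Dn * (ν (ball x₀ r) / ENNReal.ofReal (r ^ (θ * p))) := by
    have hcmp : ν (ball x₀ R) ≤ Dn * ν (ball x₀ r) := ball_le_of_le hD x₀ hr hRr
    have her : ENNReal.ofReal (r ^ (θ * p)) ≤ ENNReal.ofReal (R ^ (θ * p)) :=
      ENNReal.ofReal_le_ofReal (Real.rpow_le_rpow hr.le hrR hθp.le)
    calc ν (ball x₀ R) / ENNReal.ofReal (R ^ (θ * p))
        ≤ Dn * ν (ball x₀ r) / ENNReal.ofReal (r ^ (θ * p)) := ENNReal.div_le_div hcmp her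
      _ = Dn * (ν (ball x₀ r) / ENNReal.ofReal (r ^ (θ * p))) := mul_div_assoc _ _ _
  have hX2 : ν (ball x₀ r) / ENNReal.ofReal (r ^ (θ * p))
      ≤ Kq * (ν (ball x₀ R) / ENNReal.ofReal (R ^ (θ * p))) := by
    have h1 : ENNReal.ofReal (R ^ (θ * p)) ≤ Kq * ENNReal.ofReal (r ^ (θ * p)) := by
      rw [hKqdef, ← ENNReal.ofReal_mul (by positivity)]
      apply ENNReal.ofReal_le_ofReal
      rw [← Real.mul_rpow (by positivity) hr.le]
      refine Real.rpow_le_rpow hR.le ?_ hθp.le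
      rw [div_mul_eq_mul_div, le_div_iff₀ hΘ0]
      nlinarith
    calc ν (ball x₀ r) / ENNReal.ofReal (r ^ (θ * p))
        ≤ ν (ball x₀ R) / (1 * ENNReal.ofReal (r ^ (θ * p))) := by
          rw [one_mul]
          exact ENNReal.div_le_div (measure_mono (ball_subset_ball hrR)) (le_refl _)
      _ ≤ Kq * (ν (ball x₀ R) / (1 * ENNReal.ofReal (R ^ (θ * p)))) :=
          div_le_K_mul_div hKq0 hKqt h1
      _ = Kq * (ν (ball x₀ R) / ENNReal.ofReal (R ^ (θ * p))) := by rw [one_mul]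
  -- K dominations
  have hf1 : KU θ p Cν ≤ 1 + KU θ p Cν + KL := le_add_self.trans le_self_add
  have hf2 : KL ≤ 1 + KU θ p Cν + KL := le_add_self
  have hf3 : Dn ≤ 1 + Dn + Kq := le_add_self.trans le_self_add
  have hf4 : Kq ≤ 1 + Dn + Kq := le_add_self
  have hf5 : (1:ℝ≥0∞) ≤ 1 + Dn + Kq := le_self_add.trans le_self_add
  have hKU_K : KU θ p Cν ≤ K := by
    calc KU θ p Cν = KU θ p Cν * 1 := (mul_one _).symm
      _ ≤ K := mul_le_mul' hf1 hf5
  have hKL_K : KL ≤ K := by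
    calc KL = KL * 1 := (mul_one _).symm
      _ ≤ K := mul_le_mul' hf2 hf5
  have hKUD_K : KU θ p Cν * Dn ≤ K := mul_le_mul' hf1 hf3
  have hKqKL_K : Kq * KL ≤ K := by
    rw [mul_comm]
    exact mul_le_mul' hf2 hf4
  rw [hofC]
  refine ⟨⟨?_, ?_⟩, ?_, ?_⟩
  · calc besovCondCap ν θ p (ball x₀ r) (ball x₀ R)
        ≤ KU θ p Cν * (ν (ball x₀ R) / ENNReal.ofReal (R ^ (θ * p))) := hU
      _ ≤ KU θ p Cν * (Dn * (ν (ball x₀ r) / ENNReal.ofReal (r ^ (θ * p)))) :=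
          mul_le_mul_right hX1 _
      _ = (KU θ p Cν * Dn) * (ν (ball x₀ r) / ENNReal.ofReal (r ^ (θ * p))) :=
          (mul_assoc _ _ _).symm
      _ ≤ K * (ν (ball x₀ r) / ENNReal.ofReal (r ^ (θ * p))) := mul_le_mul_left hKUD_K _
  · calc ν (ball x₀ r) / ENNReal.ofReal (r ^ (θ * p))
        ≤ Kq * (ν (ball x₀ R) / ENNReal.ofReal (R ^ (θ * p))) := hX2
      _ ≤ Kq * (KL * besovCondCap ν θ p (ball x₀ r) (ball x₀ R)) := mul_le_mul_right hL _
      _ = (Kq * KL) * besovCondCap ν θ p (ball x₀ r) (ball x₀ R) := (mul_assoc _ _ _).symm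
      _ ≤ K * besovCondCap ν θ p (ball x₀ r) (ball x₀ R) := mul_le_mul_left hKqKL_K _
  · exact hU.trans (mul_le_mul_left hKU_K _)
  · exact hL.trans (mul_le_mul_left hKL_K _)
end

section
/- Let Y be a complete metric space with doubling measure ν, uniformly perfect at x_0, let 0 < θ < 1, 1 ≤ p < ∞, and 0 < R_0 ≤ diam(Y)/4 finite. If the lower bound cap_{θ,p}(B(x_0,r), B(x_0,R)) ≥ c ν(B(x_0,r))/r^{θp} holds for all 0 < 2r ≤ R ≤ R_0, then θp ∈ Q̲_0, i.e. there is a constant C with ν(B(x_0,r))/ν(B(x_0,R)) ≤ C (r/R)^{θp} for all 0 < r < R ≤ 1. -/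
open MeasureTheory Metric Set ENNReal

section AuxAll
set_option linter.unusedSectionVars false
set_option linter.unusedVariables false

section Aux
variable {Y : Type*} [MetricSpace Y] [MeasurableSpace Y] [BorelSpace Y]
variable {ν : Measure Y} {Cν : ℝ}

lemma doub_pow (hC : 1 < Cν) (hdoub : IsDoublingWith ν Cν) (m : ℕ) (z : Y) (t : ℝ) (ht : 0 < t) :
    ν (ball z ((2:ℝ)^m * t)) ≤ (ENNReal.ofReal Cν)^m * ν (ball z t) := by
  induction m with
  | zero => simp
  | succ n ih =>
    have h1 : (2:ℝ)^(n+1) * t = 2 * ((2:ℝ)^n * t) := by ring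
    calc ν (ball z ((2:ℝ)^(n+1) * t)) = ν (ball z (2 * ((2:ℝ)^n * t))) := by rw [h1]
      _ ≤ ENNReal.ofReal Cν * ν (ball z ((2:ℝ)^n * t)) := hdoub z _ (by positivity)
      _ ≤ ENNReal.ofReal Cν * ((ENNReal.ofReal Cν)^n * ν (ball z t)) := by
          exact mul_le_mul_right ih _
      _ = (ENNReal.ofReal Cν)^(n+1) * ν (ball z t) := by ring

lemma tb_closedBall (hC : 1 < Cν) (hdoub : IsDoublingWith ν Cν) (hballs : BallsPosFinite ν)
    (x : Y) (r : ℝ) : TotallyBounded (closedBall x r) := by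
  rcases (closedBall x r).eq_empty_or_nonempty with he | hne
  · rw [he]; exact totallyBounded_empty
  have hr : 0 ≤ r := by
    rcases hne with ⟨z, hz⟩
    exact le_trans dist_nonneg (mem_closedBall.1 hz)
  classical
  rw [Metric.totallyBounded_iff]
  by_contra h
  push_neg at h
  obtain ⟨ε, hε, h⟩ := h
  -- a point outside any finite union of ε-balls
  have key : ∀ t : Finset Y, ∃ z, z ∈ closedBall x r ∧ ∀ y ∈ t, ε ≤ dist z y := by
    intro t
    have := h (↑t : Set Y) t.finite_toSet
    rw [Set.not_subset] at this
    obtain ⟨z, hz, hz2⟩ := this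
    refine ⟨z, hz, fun y hy => ?_⟩
    by_contra hlt
    push_neg at hlt
    exact hz2 (Set.mem_biUnion hy (mem_ball.2 hlt))
  -- build a sequence of finsets and points
  let g : ℕ → Finset Y := fun n => Nat.rec ∅ (fun _ t => insert (key t).choose t) n
  let f : ℕ → Y := fun n => (key (g n)).choose
  have hg : ∀ n, g (n+1) = insert (f n) (g n) := fun n => rfl
  have hgmono : ∀ {m n}, m ≤ n → g m ⊆ g n := by
    intro m n hmn
    induction n with
    | zero => simp_all
    | succ k ih =>
      rcases Nat.lt_or_ge m (k+1) with h1 | h1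
      · have := ih (Nat.lt_succ_iff.1 h1)
        rw [hg]; exact this.trans (Finset.subset_insert _ _)
      · have : m = k+1 := le_antisymm hmn h1
        subst this; rfl
  have hf_mem : ∀ n, f n ∈ closedBall x r := fun n => (key (g n)).choose_spec.1
  have hf_sep : ∀ m n, m < n → ε ≤ dist (f n) (f m) := by
    intro m n hmn
    have h1 : f m ∈ g n := by
      have : f m ∈ g (m+1) := by rw [hg]; exact Finset.mem_insert_self _ _
      exact hgmono hmn this
    exact (key (g n)).choose_spec.2 _ h1
  -- disjoint balls
  have hdisj : Pairwise (Function.onFun Disjoint (fun n => ball (f n) (ε/2))) := by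
    intro m n hmn
    rw [Function.onFun]
    apply Set.disjoint_left.2
    intro w hw1 hw2
    have hsep : ε ≤ dist (f m) (f n) := by
      rcases hmn.lt_or_gt with h1 | h1
      · rw [dist_comm]; exact hf_sep m n h1
      · exact hf_sep n m h1
    have : dist (f m) (f n) < ε := by
      calc dist (f m) (f n) ≤ dist (f m) w + dist w (f n) := dist_triangle _ _ _
        _ < ε/2 + ε/2 := by
            rw [mem_ball] at hw1 hw2
            rw [dist_comm (f m) w]
            exact add_lt_add hw1 hw2
        _ = ε := by ring
    linarith
  -- each ball has measure at least a > 0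
  obtain ⟨m, hm⟩ := pow_unbounded_of_one_lt ((2*r+ε) / (ε/2)) (by norm_num : (1:ℝ) < 2)
  have hm' : 2*r + ε ≤ (2:ℝ)^m * (ε/2) := by
    rw [div_lt_iff₀ (by linarith : (0:ℝ) < ε/2)] at hm
    linarith
  set a := ν (ball x (r + ε)) / (ENNReal.ofReal Cν)^m with ha
  have hCpos : (0:ℝ≥0∞) < ENNReal.ofReal Cν := ENNReal.ofReal_pos.2 (by linarith)
  have hCne : (ENNReal.ofReal Cν)^m ≠ 0 := pow_ne_zero m hCpos.ne'
  have hCfin : (ENNReal.ofReal Cν)^m ≠ ∞ := by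
    exact ENNReal.pow_ne_top ENNReal.ofReal_ne_top
  have ha_pos : 0 < a := by
    apply ENNReal.div_pos (hballs x (r+ε) (by linarith)).1.ne' hCfin
  have hlb : ∀ n, a ≤ ν (ball (f n) (ε/2)) := by
    intro n
    have hsub : ball x (r + ε) ⊆ ball (f n) ((2:ℝ)^m * (ε/2)) := by
      intro z hz
      rw [mem_ball] at hz ⊢
      have h2 : dist (f n) x ≤ r := hf_mem n
      calc dist z (f n) ≤ dist z x + dist x (f n) := dist_triangle _ _ _
        _ < (r + ε) + r := by rw [dist_comm x (f n)]; linarith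
        _ ≤ (2:ℝ)^m * (ε/2) := by linarith
    have h1 : ν (ball x (r+ε)) ≤ (ENNReal.ofReal Cν)^m * ν (ball (f n) (ε/2)) :=
      le_trans (measure_mono hsub) (doub_pow hC hdoub m (f n) (ε/2) (by linarith))
    rw [ha, ENNReal.div_le_iff hCne hCfin]
    rw [mul_comm] at h1
    exact h1
  -- contradiction
  have hsub2 : (⋃ n, ball (f n) (ε/2)) ⊆ ball x (r + ε) := by
    apply Set.iUnion_subset
    intro n z hz
    rw [mem_ball] at hz ⊢
    have h2 : dist (f n) x ≤ r := hf_mem n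
    calc dist z x ≤ dist z (f n) + dist (f n) x := dist_triangle _ _ _
      _ < ε/2 + r := by linarith
      _ ≤ r + ε := by linarith
  have hfin : ν (ball x (r+ε)) < ∞ := (hballs x (r+ε) (by linarith)).2
  have : (∞:ℝ≥0∞) ≤ ν (ball x (r+ε)) := by
    calc (∞:ℝ≥0∞) = ∑' _ : ℕ, a := (ENNReal.tsum_const_eq_top_of_ne_zero ha_pos.ne').symm
      _ ≤ ∑' n, ν (ball (f n) (ε/2)) := ENNReal.tsum_le_tsum hlb
      _ = ν (⋃ n, ball (f n) (ε/2)) := (measure_iUnion hdisj (fun n => measurableSet_ball)).symm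
      _ ≤ ν (ball x (r+ε)) := measure_mono hsub2
  exact absurd (lt_of_le_of_lt this hfin) (lt_irrefl _)

lemma compact_closedBall [CompleteSpace Y] (hC : 1 < Cν) (hdoub : IsDoublingWith ν Cν)
    (hballs : BallsPosFinite ν) (x : Y) (r : ℝ) : IsCompact (closedBall x r) :=
  TotallyBounded.isCompact_of_isClosed (tb_closedBall hC hdoub hballs x r) Metric.isClosed_closedBall

end Aux


section Aux2
variable {Y : Type*} [MetricSpace Y] [MeasurableSpace Y] [BorelSpace Y]
variable {ν : Measure Y} {Cν : ℝ}

lemma ofReal_div_mul (a b : ℝ) (c : ℝ≥0∞) (hb : 0 < b) :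
    ENNReal.ofReal a / (ENNReal.ofReal b * c) = ENNReal.ofReal (a / b) / c := by
  have h1 : ENNReal.ofReal b ≠ 0 := (ENNReal.ofReal_pos.2 hb).ne'
  rw [ENNReal.ofReal_div_of_pos hb, div_eq_mul_inv, div_eq_mul_inv, div_eq_mul_inv,
    ENNReal.mul_inv (Or.inl h1) (Or.inl ENNReal.ofReal_ne_top), mul_assoc]

lemma geom_ofReal {q : ℝ} (h0 : 0 ≤ q) (h1 : q < 1) :
    ∑' k : ℕ, (ENNReal.ofReal q)^k = ENNReal.ofReal ((1-q)⁻¹) := by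
  rw [ENNReal.tsum_geometric, ENNReal.ofReal_inv_of_pos (by linarith),
    ENNReal.ofReal_sub _ h0, ENNReal.ofReal_one]

lemma one_lt_two_rpow {σ : ℝ} (hσ : 0 < σ) : 1 < (2:ℝ)^σ := by
  rw [Real.one_lt_rpow_iff_of_pos (by norm_num)]
  exact Or.inl ⟨by norm_num, hσ⟩

lemma exists_dyadic_up {t d : ℝ} (ht : 0 < t) (hd : t ≤ d) :
    ∃ k : ℕ, t * 2^k ≤ d ∧ d < t * 2^(k+1) := by
  have hex : ∃ n : ℕ, d < t * 2^(n+1) := by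
    obtain ⟨n, hn⟩ := pow_unbounded_of_one_lt (d / t) (by norm_num : (1:ℝ) < 2)
    rw [div_lt_iff₀ ht] at hn
    have h2 : (2:ℝ)^n ≤ 2^(n+1) := by
      rw [pow_succ]
      nlinarith [pow_nonneg (by norm_num : (0:ℝ) ≤ 2) n]
    exact ⟨n, by calc d < 2^n * t := hn
      _ = t * 2^n := mul_comm _ _
      _ ≤ t * 2^(n+1) := mul_le_mul_of_nonneg_left h2 ht.le⟩
  refine ⟨Nat.find hex, ?_, Nat.find_spec hex⟩
  rcases Nat.eq_zero_or_pos (Nat.find hex) with h0 | h0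
  · simpa [h0] using hd
  · have := Nat.find_min hex (Nat.sub_lt h0 one_pos)
    push_neg at this
    calc t * 2^(Nat.find hex) = t * 2^(Nat.find hex - 1 + 1) := by
          rw [Nat.sub_add_cancel h0]
      _ ≤ d := this

lemma exists_dyadic_down {t d : ℝ} (hd : 0 < d) (hdt : d < t) :
    ∃ k : ℕ, t / 2^(k+1) ≤ d ∧ d < t / 2^k := by
  have ht : 0 < t := lt_trans hd hdt
  have hex : ∃ n : ℕ, t / 2^(n+1) ≤ d := by
    obtain ⟨n, hn⟩ := pow_unbounded_of_one_lt (t / d) (by norm_num : (1:ℝ) < 2)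
    refine ⟨n, ?_⟩
    rw [div_le_iff₀ (by positivity)]
    rw [div_lt_iff₀ hd] at hn
    have h2 : (2:ℝ)^n ≤ 2^(n+1) := by
      rw [pow_succ]
      nlinarith [pow_nonneg (by norm_num : (0:ℝ) ≤ 2) n]
    calc t ≤ 2^n * d := hn.le
      _ = d * 2^n := mul_comm _ _
      _ ≤ d * 2^(n+1) := mul_le_mul_of_nonneg_left h2 hd.le
  refine ⟨Nat.find hex, Nat.find_spec hex, ?_⟩
  rcases Nat.eq_zero_or_pos (Nat.find hex) with h0 | h0
  · simpa [h0] using hdt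
  · have := Nat.find_min hex (Nat.sub_lt h0 one_pos)
    push_neg at this
    calc d < t / 2^(Nat.find hex - 1 + 1) := this
      _ = t / 2^(Nat.find hex) := by rw [Nat.sub_add_cancel h0]

lemma rpow_mul_pow {t σ : ℝ} (ht : 0 < t) (k : ℕ) :
    (t * 2^k)^σ = t^σ * ((2:ℝ)^σ)^k := by
  rw [Real.mul_rpow ht.le (by positivity), ← Real.rpow_natCast (2:ℝ) k,
    ← Real.rpow_natCast ((2:ℝ)^σ) k, ← Real.rpow_mul (by norm_num),
    ← Real.rpow_mul (by norm_num), mul_comm σ (k:ℝ)]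

lemma rpow_div_pow {t τ : ℝ} (ht : 0 < t) (k : ℕ) :
    (t / 2^k)^τ = t^τ * (((2:ℝ)^τ)⁻¹)^k := by
  rw [Real.div_rpow ht.le (by positivity), ← Real.rpow_natCast (2:ℝ) k,
    ← Real.rpow_mul (by norm_num), mul_comm (k:ℝ) τ, Real.rpow_mul (by norm_num),
    Real.rpow_natCast, div_eq_mul_inv, inv_pow]

/-- Integral over an annulus `a ≤ d < 2a` of a function bounded by `M / ν(B(x,a))`. -/
lemma annulus_int_le (hdoub : IsDoublingWith ν Cν) (hballs : BallsPosFinite ν)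
    (x : Y) (a : ℝ) (ha : 0 < a) (f : Y → ℝ≥0∞) (M : ℝ≥0∞)
    (hf : ∀ y, a ≤ dist x y → dist x y < 2*a → f y ≤ M / ν (ball x a)) :
    ∫⁻ y in {y | a ≤ dist x y ∧ dist x y < 2*a}, f y ∂ν ≤ ENNReal.ofReal Cν * M := by
  have hdm : Measurable (fun y => dist x y) := (continuous_const.dist continuous_id).measurable
  have hs : MeasurableSet {y : Y | a ≤ dist x y ∧ dist x y < 2*a} := by
    have h1 : MeasurableSet {y : Y | a ≤ dist x y} := measurableSet_le measurable_const hdm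
    have h2 : MeasurableSet {y : Y | dist x y < 2*a} := measurableSet_lt hdm measurable_const
    exact (h1.inter h2 : _)
  calc ∫⁻ y in {y | a ≤ dist x y ∧ dist x y < 2*a}, f y ∂ν
      ≤ ∫⁻ _ in {y | a ≤ dist x y ∧ dist x y < 2*a}, (M / ν (ball x a)) ∂ν :=
        setLIntegral_mono' hs (fun y hy => hf y hy.1 hy.2)
    _ = M / ν (ball x a) * ν {y | a ≤ dist x y ∧ dist x y < 2*a} := setLIntegral_const _ _
    _ ≤ M / ν (ball x a) * (ENNReal.ofReal Cν * ν (ball x a)) := by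
        apply mul_le_mul_right
        refine le_trans (measure_mono ?_) (hdoub x a ha)
        intro y hy
        exact mem_ball'.2 hy.2
    _ = ENNReal.ofReal Cν * (M / ν (ball x a) * ν (ball x a)) := by ring
    _ = ENNReal.ofReal Cν * M := by
        rw [ENNReal.div_mul_cancel (hballs x a ha).1.ne' (hballs x a ha).2.ne]

/-- Tail estimate: integral over `{d ≥ t}` of a function bounded by `d^{-σ}/ν(B(x,d))`. -/
lemma tail_int_le (hCpos : 0 ≤ Cν) (hdoub : IsDoublingWith ν Cν) (hballs : BallsPosFinite ν)
    {σ : ℝ} (hσ : 0 < σ) (x : Y) (t : ℝ) (ht : 0 < t) (f : Y → ℝ≥0∞)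
    (hf : ∀ y, t ≤ dist x y →
      f y ≤ ENNReal.ofReal (((dist x y)^σ)⁻¹) / ν (ball x (dist x y))) :
    ∫⁻ y in {y | t ≤ dist x y}, f y ∂ν ≤
      ENNReal.ofReal (Cν * (1 - ((2:ℝ)^σ)⁻¹)⁻¹ * (t^σ)⁻¹) := by
  have hq0 : (0:ℝ) ≤ ((2:ℝ)^σ)⁻¹ := by positivity
  have hq1 : ((2:ℝ)^σ)⁻¹ < 1 := by
    rw [inv_lt_one_iff₀]; exact Or.inr (one_lt_two_rpow hσ)
  have h1q : (0:ℝ) < 1 - ((2:ℝ)^σ)⁻¹ := by linarith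
  have hsub : {y : Y | t ≤ dist x y} ⊆ ⋃ k : ℕ, {y | t * 2^k ≤ dist x y ∧ dist x y < 2*(t * 2^k)} := by
    intro y hy
    obtain ⟨k, hk1, hk2⟩ := exists_dyadic_up ht hy
    exact mem_iUnion.2 ⟨k, hk1, by rw [show 2*(t*2^k) = t * 2^(k+1) by ring]; exact hk2⟩
  calc ∫⁻ y in {y | t ≤ dist x y}, f y ∂ν
      ≤ ∫⁻ y in ⋃ k : ℕ, {y | t * 2^k ≤ dist x y ∧ dist x y < 2*(t * 2^k)}, f y ∂ν :=
        lintegral_mono_set hsub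
    _ ≤ ∑' k : ℕ, ∫⁻ y in {y | t * 2^k ≤ dist x y ∧ dist x y < 2*(t * 2^k)}, f y ∂ν :=
        lintegral_iUnion_le _ _
    _ ≤ ∑' k : ℕ, ENNReal.ofReal Cν * ENNReal.ofReal (((t * 2^k)^σ)⁻¹) := by
        apply ENNReal.tsum_le_tsum
        intro k
        apply annulus_int_le hdoub hballs x (t*2^k) (by positivity) f _
        intro y h1 h2
        refine le_trans (hf y (le_trans (le_mul_of_one_le_right ht.le (one_le_pow₀ (by norm_num))) h1)) ?_
        apply ENNReal.div_le_div
        · apply ENNReal.ofReal_le_ofReal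
          apply inv_anti₀ (by positivity)
          exact Real.rpow_le_rpow (by positivity) h1 hσ.le
        · exact measure_mono (ball_subset_ball h1)
    _ = ENNReal.ofReal Cν * ENNReal.ofReal ((t^σ)⁻¹) * ∑' k : ℕ, (ENNReal.ofReal (((2:ℝ)^σ)⁻¹))^k := by
        rw [← ENNReal.tsum_mul_left]
        congr 1; funext k
        rw [rpow_mul_pow ht k, mul_inv, ENNReal.ofReal_mul (by positivity), ← inv_pow,
          ENNReal.ofReal_pow hq0]
        ring
    _ = ENNReal.ofReal Cν * ENNReal.ofReal ((t^σ)⁻¹) * ENNReal.ofReal ((1 - ((2:ℝ)^σ)⁻¹)⁻¹) := by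
        rw [geom_ofReal hq0 hq1]
    _ = ENNReal.ofReal (Cν * (1 - ((2:ℝ)^σ)⁻¹)⁻¹ * (t^σ)⁻¹) := by
        rw [ENNReal.ofReal_mul (mul_nonneg hCpos (inv_nonneg.2 h1q.le)),
          ENNReal.ofReal_mul hCpos]
        ring

/-- Near estimate: integral over `{d < t}` of a function bounded by `d^τ/ν(B(x,d))`, vanishing at `x`. -/
lemma near_int_le (hCpos : 0 ≤ Cν) (hdoub : IsDoublingWith ν Cν) (hballs : BallsPosFinite ν)
    {τ : ℝ} (hτ : 0 < τ) {A : ℝ} (hA : 0 ≤ A) (x : Y) (t : ℝ) (ht : 0 < t) (f : Y → ℝ≥0∞)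
    (hfx : f x = 0)
    (hf : ∀ y, y ≠ x → dist x y < t →
      f y ≤ ENNReal.ofReal (A * (dist x y)^τ) / ν (ball x (dist x y))) :
    ∫⁻ y in {y | dist x y < t}, f y ∂ν ≤
      ENNReal.ofReal (Cν * (1 - ((2:ℝ)^τ)⁻¹)⁻¹ * (A * t^τ)) := by
  have hq0 : (0:ℝ) ≤ ((2:ℝ)^τ)⁻¹ := by positivity
  have hq1 : ((2:ℝ)^τ)⁻¹ < 1 := by
    rw [inv_lt_one_iff₀]; exact Or.inr (one_lt_two_rpow hτ)
  have h1q : (0:ℝ) < 1 - ((2:ℝ)^τ)⁻¹ := by linarith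
  have hsub : {y : Y | dist x y < t} ⊆
      {x} ∪ ⋃ k : ℕ, {y | t/2^(k+1) ≤ dist x y ∧ dist x y < 2*(t/2^(k+1))} := by
    intro y hy
    rcases eq_or_ne y x with rfl | hyx
    · exact Or.inl rfl
    · have hd : 0 < dist x y := dist_pos.2 (fun h => hyx h.symm)
      obtain ⟨k, hk1, hk2⟩ := exists_dyadic_down hd hy
      refine Or.inr (mem_iUnion.2 ⟨k, hk1, ?_⟩)
      rw [show 2*(t/2^(k+1)) = t/2^k by field_simp; ring]
      exact hk2
  calc ∫⁻ y in {y | dist x y < t}, f y ∂ν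
      ≤ ∫⁻ y in {x} ∪ ⋃ k : ℕ, {y | t/2^(k+1) ≤ dist x y ∧ dist x y < 2*(t/2^(k+1))}, f y ∂ν :=
        lintegral_mono_set hsub
    _ ≤ (∫⁻ y in {x}, f y ∂ν) +
        ∫⁻ y in ⋃ k : ℕ, {y | t/2^(k+1) ≤ dist x y ∧ dist x y < 2*(t/2^(k+1))}, f y ∂ν :=
        lintegral_union_le _ _ _
    _ ≤ 0 + ∑' k : ℕ, ∫⁻ y in {y | t/2^(k+1) ≤ dist x y ∧ dist x y < 2*(t/2^(k+1))}, f y ∂ν := by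
        refine add_le_add ?_ (lintegral_iUnion_le _ _)
        have hb : ∀ y ∈ ({x} : Set Y), f y ≤ (0:ℝ≥0∞) := by
          intro y hy
          rw [mem_singleton_iff] at hy
          rw [hy, hfx]
        calc ∫⁻ y in {x}, f y ∂ν ≤ ∫⁻ _ in ({x} : Set Y), (0:ℝ≥0∞) ∂ν :=
              setLIntegral_mono' (measurableSet_singleton x) hb
          _ = 0 := by simp
    _ = ∑' k : ℕ, ∫⁻ y in {y | t/2^(k+1) ≤ dist x y ∧ dist x y < 2*(t/2^(k+1))}, f y ∂ν := by
        rw [zero_add]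
    _ ≤ ∑' k : ℕ, ENNReal.ofReal Cν * ENNReal.ofReal (A * (t/2^k)^τ) := by
        apply ENNReal.tsum_le_tsum
        intro k
        apply annulus_int_le hdoub hballs x (t/2^(k+1)) (by positivity) f _
        intro y h1 h2
        have h2' : dist x y < t/2^k := by
          rw [show 2*(t/2^(k+1)) = t/2^k by field_simp; ring] at h2
          exact h2
        have hd : 0 < dist x y := lt_of_lt_of_le (by positivity) h1
        have hyx : y ≠ x := fun h => by subst h; simp at hd
        refine le_trans (hf y hyx (lt_of_lt_of_le h2' (by
          apply div_le_self ht.le (one_le_pow₀ (by norm_num))))) ?_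
        apply ENNReal.div_le_div
        · exact ENNReal.ofReal_le_ofReal
            (mul_le_mul_of_nonneg_left (Real.rpow_le_rpow hd.le h2'.le hτ.le) hA)
        · exact measure_mono (ball_subset_ball h1)
    _ = ENNReal.ofReal Cν * ENNReal.ofReal (A * t^τ) *
          ∑' k : ℕ, (ENNReal.ofReal (((2:ℝ)^τ)⁻¹))^k := by
        rw [← ENNReal.tsum_mul_left]
        congr 1; funext k
        rw [rpow_div_pow ht k, ← mul_assoc,
          ENNReal.ofReal_mul (mul_nonneg hA (Real.rpow_nonneg ht.le τ)),
          ENNReal.ofReal_pow hq0]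
        ring
    _ = ENNReal.ofReal Cν * ENNReal.ofReal (A * t^τ) *
          ENNReal.ofReal ((1 - ((2:ℝ)^τ)⁻¹)⁻¹) := by
        rw [geom_ofReal hq0 hq1]
    _ = ENNReal.ofReal (Cν * (1 - ((2:ℝ)^τ)⁻¹)⁻¹ * (A * t^τ)) := by
        rw [ENNReal.ofReal_mul (mul_nonneg hCpos (inv_nonneg.2 h1q.le)),
          ENNReal.ofReal_mul hCpos]
        ring

end Aux2


section Cut
variable {Y : Type*} [MetricSpace Y] [MeasurableSpace Y] [BorelSpace Y]
variable {ν : Measure Y} {Cν : ℝ}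

/-- The cutoff: `1` on `B(x₀,R/2)`, `0` outside `B(x₀,3R/4)`, `4/R`-Lipschitz. -/
noncomputable def cutFn (x₀ : Y) (R : ℝ) (z : Y) : ℝ :=
  max 0 (min 1 (3 - 4 * dist z x₀ / R))

lemma cutFn_nonneg (x₀ : Y) (R : ℝ) (z : Y) : 0 ≤ cutFn x₀ R z := le_max_left _ _

lemma cutFn_le_one (x₀ : Y) (R : ℝ) (z : Y) : cutFn x₀ R z ≤ 1 :=
  max_le zero_le_one (min_le_left _ _)

lemma cutFn_eq_one {x₀ : Y} {R : ℝ} (hR : 0 < R) {z : Y} (hz : dist z x₀ < R/2) :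
    cutFn x₀ R z = 1 := by
  have h1 : (1:ℝ) ≤ 3 - 4 * dist z x₀ / R := by
    have h2 : 4 * dist z x₀ / R < 2 := by
      rw [div_lt_iff₀ hR]; nlinarith
    linarith
  unfold cutFn
  rw [min_eq_left h1, max_eq_right zero_le_one]

lemma cutFn_eq_zero {x₀ : Y} {R : ℝ} (hR : 0 < R) {z : Y} (hz : 3*R/4 ≤ dist z x₀) :
    cutFn x₀ R z = 0 := by
  have h1 : 3 - 4 * dist z x₀ / R ≤ 0 := by
    rw [sub_nonpos, le_div_iff₀ hR]
    nlinarith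
  unfold cutFn
  rw [max_eq_left (le_trans (min_le_right _ _) h1)]

lemma cutFn_lip {x₀ : Y} {R : ℝ} (hR : 0 < R) (a b : Y) :
    |cutFn x₀ R a - cutFn x₀ R b| ≤ 4/R * dist a b := by
  unfold cutFn
  rw [max_comm 0 (min 1 (3 - 4 * dist a x₀ / R)), max_comm 0 (min 1 (3 - 4 * dist b x₀ / R))]
  have step1 := abs_max_sub_max_le_abs (min 1 (3 - 4 * dist a x₀ / R))
    (min 1 (3 - 4 * dist b x₀ / R)) 0
  have step2 := abs_min_sub_min_le_max (1:ℝ) (3 - 4 * dist a x₀ / R) 1 (3 - 4 * dist b x₀ / R)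
  have step3 : max |(1:ℝ) - 1| |(3 - 4 * dist a x₀ / R) - (3 - 4 * dist b x₀ / R)|
      = |(3 - 4 * dist a x₀ / R) - (3 - 4 * dist b x₀ / R)| := by
    rw [sub_self, abs_zero]
    exact max_eq_right (abs_nonneg _)
  have h2 : (3 - 4 * dist a x₀ / R) - (3 - 4 * dist b x₀ / R)
      = 4/R * (dist b x₀ - dist a x₀) := by ring
  have h4 : |(3 - 4 * dist a x₀ / R) - (3 - 4 * dist b x₀ / R)| ≤ 4/R * dist a b := by
    rw [h2, abs_mul, abs_of_pos (by positivity : (0:ℝ) < 4/R)]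
    have h5 := abs_dist_sub_le b a x₀
    rw [dist_comm b a] at h5
    exact mul_le_mul_of_nonneg_left h5 (by positivity)
  rw [step3] at step2
  exact le_trans step1 (le_trans step2 h4)

variable (hp : 1 ≤ p) -- dummy

/-- Uniform pointwise bound on the point energy of the cutoff. -/
lemma point_energy_le {θ p : ℝ} (hθ0 : 0 < θ) (hθ1 : θ < 1) (hp : 1 ≤ p)
    (hC : 1 < Cν) (hdoub : IsDoublingWith ν Cν) (hballs : BallsPosFinite ν)
    (x₀ : Y) {R : ℝ} (hR : 0 < R) (x : Y) :
    besovPointEnergy ν θ p (cutFn x₀ R) x ≤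
      ENNReal.ofReal (Cν * (1 - ((2:ℝ)^(p - θ*p))⁻¹)⁻¹ * ((4/R)^p * R^(p - θ*p))
        + Cν * (1 - ((2:ℝ)^(θ*p))⁻¹)⁻¹ * (R^(θ*p))⁻¹) := by
  classical
  have hp0 : (0:ℝ) < p := lt_of_lt_of_le one_pos hp
  have hσ : 0 < θ*p := by positivity
  have hτ : 0 < p - θ*p := by nlinarith
  have hCpos : (0:ℝ) ≤ Cν := le_of_lt (lt_trans one_pos hC)
  set u := cutFn x₀ R with hu
  set F : Y → ℝ≥0∞ := fun y => (if x = y then 0 else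
    ENNReal.ofReal (|u x - u y| ^ p) /
      (ENNReal.ofReal (dist x y ^ (θ * p)) * ν (ball x (dist x y)))) with hF
  have hmeas : MeasurableSet {y : Y | dist x y < R} :=
    measurableSet_lt ((continuous_const.dist continuous_id).measurable) measurable_const
  have hsplit : besovPointEnergy ν θ p u x
      = (∫⁻ y in {y | dist x y < R}, F y ∂ν) + ∫⁻ y in {y | dist x y < R}ᶜ, F y ∂ν := by
    rw [besovPointEnergy, ← lintegral_add_compl (fun y => F y) hmeas]
  rw [hsplit]
  have hnear : (∫⁻ y in {y | dist x y < R}, F y ∂ν) ≤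
      ENNReal.ofReal (Cν * (1 - ((2:ℝ)^(p - θ*p))⁻¹)⁻¹ * ((4/R)^p * R^(p - θ*p))) := by
    apply near_int_le hCpos hdoub hballs hτ (by positivity : (0:ℝ) ≤ (4/R)^p) x R hR F
    · simp [hF]
    · intro y hyx hylt
      have hxy : x ≠ y := fun h => hyx h.symm
      have hd0 : 0 < dist x y := dist_pos.2 hxy
      rw [hF]
      simp only [if_neg hxy]
      rw [ofReal_div_mul _ _ _ (Real.rpow_pos_of_pos hd0 (θ*p))]
      apply ENNReal.div_le_div _ le_rfl
      apply ENNReal.ofReal_le_ofReal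
      rw [div_le_iff₀ (Real.rpow_pos_of_pos hd0 (θ*p))]
      have hlip : |u x - u y| ≤ 4/R * dist x y := cutFn_lip hR x y
      have h1 : |u x - u y|^p ≤ (4/R * dist x y)^p :=
        Real.rpow_le_rpow (abs_nonneg _) hlip hp0.le
      have h2 : (4/R * dist x y)^p = (4/R)^p * (dist x y)^p :=
        Real.mul_rpow (by positivity) hd0.le
      have h3 : (dist x y)^p = (dist x y)^(p - θ*p) * (dist x y)^(θ*p) := by
        rw [← Real.rpow_add hd0]; congr 1; ring
      calc |u x - u y|^p ≤ (4/R)^p * (dist x y)^p := by rw [← h2]; exact h1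
        _ = (4/R)^p * ((dist x y)^(p-θ*p) * (dist x y)^(θ*p)) := by rw [← h3]
        _ = (4/R)^p * (dist x y)^(p-θ*p) * (dist x y)^(θ*p) := by ring
  have htail : (∫⁻ y in {y | dist x y < R}ᶜ, F y ∂ν) ≤
      ENNReal.ofReal (Cν * (1 - ((2:ℝ)^(θ*p))⁻¹)⁻¹ * (R^(θ*p))⁻¹) := by
    have hcompl : {y : Y | dist x y < R}ᶜ = {y : Y | R ≤ dist x y} := by
      ext y; simp [not_lt]
    rw [hcompl]
    apply tail_int_le hCpos hdoub hballs hσ x R hR F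
    intro y hy
    have hd0 : 0 < dist x y := lt_of_lt_of_le hR hy
    have hxy : x ≠ y := fun h => by rw [h, dist_self] at hd0; exact lt_irrefl _ hd0
    rw [hF]
    simp only [if_neg hxy]
    rw [ofReal_div_mul _ _ _ (Real.rpow_pos_of_pos hd0 (θ*p))]
    apply ENNReal.div_le_div _ le_rfl
    apply ENNReal.ofReal_le_ofReal
    rw [div_le_iff₀ (Real.rpow_pos_of_pos hd0 (θ*p)), inv_mul_cancel₀ (Real.rpow_pos_of_pos hd0 (θ*p)).ne']
    apply Real.rpow_le_one (abs_nonneg _) _ hp0.le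
    have h1 := cutFn_nonneg x₀ R x
    have h2 := cutFn_le_one x₀ R x
    have h3 := cutFn_nonneg x₀ R y
    have h4 := cutFn_le_one x₀ R y
    rw [abs_le]; constructor <;> [linarith; linarith]
  calc (∫⁻ y in {y | dist x y < R}, F y ∂ν) + ∫⁻ y in {y | dist x y < R}ᶜ, F y ∂ν
      ≤ ENNReal.ofReal (Cν * (1 - ((2:ℝ)^(p - θ*p))⁻¹)⁻¹ * ((4/R)^p * R^(p - θ*p)))
        + ENNReal.ofReal (Cν * (1 - ((2:ℝ)^(θ*p))⁻¹)⁻¹ * (R^(θ*p))⁻¹) :=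
        add_le_add hnear htail
    _ = _ := by
        rw [← ENNReal.ofReal_add]
        · have hγτ : (0:ℝ) < 1 - ((2:ℝ)^(p - θ*p))⁻¹ := by
            have := one_lt_two_rpow hτ
            have : ((2:ℝ)^(p-θ*p))⁻¹ < 1 := by
              rw [inv_lt_one_iff₀]; right; assumption
            linarith
          positivity
        · have hγσ : (0:ℝ) < 1 - ((2:ℝ)^(θ*p))⁻¹ := by
            have := one_lt_two_rpow hσ
            have : ((2:ℝ)^(θ*p))⁻¹ < 1 := by
              rw [inv_lt_one_iff₀]; right; assumption
            linarith
          positivity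

end Cut


section Far
variable {Y : Type*} [MetricSpace Y] [MeasurableSpace Y] [BorelSpace Y]
variable {ν : Measure Y} {Cν : ℝ}

lemma ennreal_div_assist {X a b K : ℝ≥0∞} (ha0 : a ≠ 0) (hat : a ≠ ∞) (hb0 : b ≠ 0)
    (hbt : b ≠ ∞) (h : b ≤ K * a) : X / a ≤ K * (X / b) := by
  rw [ENNReal.div_le_iff ha0 hat]
  calc X = X / b * b := (ENNReal.div_mul_cancel hb0 hbt).symm
    _ ≤ X / b * (K * a) := mul_le_mul_right h _
    _ = K * (X / b) * a := by ring

lemma pe_far {θ p : ℝ} (hθ0 : 0 < θ) (hp : 1 ≤ p)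
    (hC : 1 < Cν) (hdoub : IsDoublingWith ν Cν) (hballs : BallsPosFinite ν)
    (x₀ : Y) {R : ℝ} (hR : 0 < R) (x : Y) (hx : 2*R ≤ dist x x₀) :
    besovPointEnergy ν θ p (cutFn x₀ R) x ≤
      ENNReal.ofReal (Cν^2 * ((dist x x₀ / 2)^(θ*p))⁻¹) *
        (ν (ball x₀ R) / ν (ball x₀ (dist x x₀))) := by
  classical
  have hp0 : (0:ℝ) < p := lt_of_lt_of_le one_pos hp
  have hCpos : (0:ℝ) ≤ Cν := le_of_lt (lt_trans one_pos hC)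
  set D := dist x x₀ with hD
  have hD0 : 0 < D := lt_of_lt_of_le (by linarith) hx
  have hD2 : 0 < D/2 := by linarith
  set u := cutFn x₀ R with hu
  have hux : u x = 0 := cutFn_eq_zero hR (by linarith)
  set cst : ℝ≥0∞ := ENNReal.ofReal (((D/2)^(θ*p))⁻¹) / ν (ball x (D/2)) with hcst
  have hpoint : ∀ y : Y, (if x = y then 0 else
      ENNReal.ofReal (|u x - u y| ^ p) /
        (ENNReal.ofReal (dist x y ^ (θ * p)) * ν (ball x (dist x y)))) ≤
      (ball x₀ R).indicator (fun _ => cst) y := by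
    intro y
    rcases eq_or_ne x y with rfl | hxy
    · simp
    rw [if_neg hxy]
    by_cases hyB : y ∈ ball x₀ R
    · rw [indicator_of_mem hyB]
      have hyR : dist y x₀ < R := mem_ball.1 hyB
      have hd0 : 0 < dist x y := dist_pos.2 hxy
      have hdge : D/2 ≤ dist x y := by
        have htri : D ≤ dist x y + dist y x₀ := dist_triangle x y x₀
        linarith
      rw [ofReal_div_mul _ _ _ (Real.rpow_pos_of_pos hd0 (θ*p))]
      rw [hcst]
      apply ENNReal.div_le_div
      · apply ENNReal.ofReal_le_ofReal
        rw [← one_div]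
        apply div_le_div₀ zero_le_one _ (Real.rpow_pos_of_pos hD2 (θ*p))
          (Real.rpow_le_rpow hD2.le hdge (by positivity))
        apply Real.rpow_le_one (abs_nonneg _) _ hp0.le
        have h1 := cutFn_nonneg x₀ R x
        have h2 := cutFn_le_one x₀ R x
        have h3 := cutFn_nonneg x₀ R y
        have h4 := cutFn_le_one x₀ R y
        rw [abs_le]; constructor <;> [linarith; linarith]
      · exact measure_mono (ball_subset_ball hdge)
    · rw [indicator_of_notMem hyB]
      have hyR : R ≤ dist y x₀ := by
        rw [mem_ball, not_lt] at hyB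
        exact hyB
      have huy : u y = 0 := cutFn_eq_zero hR (by linarith)
      rw [hux, huy]
      simp [Real.zero_rpow hp0.ne', ENNReal.ofReal_zero, ENNReal.zero_div]
  have hmono : besovPointEnergy ν θ p u x ≤ cst * ν (ball x₀ R) := by
    calc besovPointEnergy ν θ p u x
        ≤ ∫⁻ y, (ball x₀ R).indicator (fun _ => cst) y ∂ν := lintegral_mono hpoint
      _ = ∫⁻ _ in ball x₀ R, cst ∂ν := lintegral_indicator measurableSet_ball _
      _ = cst * ν (ball x₀ R) := setLIntegral_const _ _
  refine le_trans hmono ?_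
  -- now compare cst * ν B_R with the target
  have hbx : 0 < ν (ball x (D/2)) ∧ ν (ball x (D/2)) < ∞ := hballs x (D/2) hD2
  have hbx0 : 0 < ν (ball x₀ D) ∧ ν (ball x₀ D) < ∞ := hballs x₀ D hD0
  have hdoub2 : ν (ball x₀ D) ≤ ENNReal.ofReal (Cν^2) * ν (ball x (D/2)) := by
    have hsub : ball x₀ D ⊆ ball x ((2:ℝ)^2 * (D/2)) := by
      intro z hz
      rw [mem_ball] at hz ⊢
      have : (2:ℝ)^2 * (D/2) = 2*D := by ring
      rw [this]
      calc dist z x ≤ dist z x₀ + dist x₀ x := dist_triangle _ _ _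
        _ < D + D := by rw [dist_comm x₀ x, ← hD]; linarith
        _ = 2*D := by ring
    calc ν (ball x₀ D) ≤ ν (ball x ((2:ℝ)^2 * (D/2))) := measure_mono hsub
      _ ≤ (ENNReal.ofReal Cν)^2 * ν (ball x (D/2)) := doub_pow hC hdoub 2 x (D/2) hD2
      _ = ENNReal.ofReal (Cν^2) * ν (ball x (D/2)) := by rw [ENNReal.ofReal_pow hCpos]
  rw [hcst, div_eq_mul_inv, mul_right_comm, ← div_eq_mul_inv]
  calc ENNReal.ofReal (((D/2)^(θ*p))⁻¹) * ν (ball x₀ R) / ν (ball x (D/2))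
      ≤ ENNReal.ofReal (Cν^2) *
        (ENNReal.ofReal (((D/2)^(θ*p))⁻¹) * ν (ball x₀ R) / ν (ball x₀ D)) :=
        ennreal_div_assist hbx.1.ne' hbx.2.ne hbx0.1.ne' hbx0.2.ne hdoub2
    _ = ENNReal.ofReal (Cν^2 * ((D/2)^(θ*p))⁻¹) * (ν (ball x₀ R) / ν (ball x₀ D)) := by
        rw [ENNReal.ofReal_mul (by positivity), mul_div_assoc, mul_assoc]

/-- Total energy bound for the cutoff function. -/
lemma energy_cut_le {θ p : ℝ} (hθ0 : 0 < θ) (hθ1 : θ < 1) (hp : 1 ≤ p)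
    (hC : 1 < Cν) (hdoub : IsDoublingWith ν Cν) (hballs : BallsPosFinite ν)
    (x₀ : Y) {R : ℝ} (hR : 0 < R) :
    besovEnergy ν θ p (cutFn x₀ R) ≤
      ENNReal.ofReal (Cν * (Cν * (1 - ((2:ℝ)^(p - θ*p))⁻¹)⁻¹ * ((4/R)^p * R^(p - θ*p))
          + Cν * (1 - ((2:ℝ)^(θ*p))⁻¹)⁻¹ * (R^(θ*p))⁻¹)
        + Cν^3 * (1 - ((2:ℝ)^(θ*p))⁻¹)⁻¹ * (R^(θ*p))⁻¹) * ν (ball x₀ R) := by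
  classical
  have hp0 : (0:ℝ) < p := lt_of_lt_of_le one_pos hp
  have hσ : (0:ℝ) < θ*p := by positivity
  have hτ : (0:ℝ) < p - θ*p := by nlinarith
  have hCpos : (0:ℝ) ≤ Cν := le_of_lt (lt_trans one_pos hC)
  have hγτ : (0:ℝ) < 1 - ((2:ℝ)^(p - θ*p))⁻¹ := by
    have h := one_lt_two_rpow hτ
    have : ((2:ℝ)^(p-θ*p))⁻¹ < 1 := by rw [inv_lt_one_iff₀]; right; assumption
    linarith
  have hγσ : (0:ℝ) < 1 - ((2:ℝ)^(θ*p))⁻¹ := by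
    have h := one_lt_two_rpow hσ
    have : ((2:ℝ)^(θ*p))⁻¹ < 1 := by rw [inv_lt_one_iff₀]; right; assumption
    linarith
  set PB : ℝ := Cν * (1 - ((2:ℝ)^(p - θ*p))⁻¹)⁻¹ * ((4/R)^p * R^(p - θ*p))
    + Cν * (1 - ((2:ℝ)^(θ*p))⁻¹)⁻¹ * (R^(θ*p))⁻¹ with hPB
  have hPBpos : 0 ≤ PB := by
    rw [hPB]; positivity
  set pe : Y → ℝ≥0∞ := besovPointEnergy ν θ p (cutFn x₀ R) with hpe
  have hsplit : besovEnergy ν θ p (cutFn x₀ R)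
      = (∫⁻ x in ball x₀ (2*R), pe x ∂ν) + ∫⁻ x in (ball x₀ (2*R))ᶜ, pe x ∂ν := by
    rw [besovEnergy, ← lintegral_add_compl (fun x => pe x) measurableSet_ball]
  have hpart1 : (∫⁻ x in ball x₀ (2*R), pe x ∂ν) ≤
      ENNReal.ofReal (Cν * PB) * ν (ball x₀ R) := by
    calc (∫⁻ x in ball x₀ (2*R), pe x ∂ν)
        ≤ ∫⁻ _ in ball x₀ (2*R), ENNReal.ofReal PB ∂ν :=
          setLIntegral_mono' measurableSet_ball
            (fun x _ => point_energy_le hθ0 hθ1 hp hC hdoub hballs x₀ hR x)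
      _ = ENNReal.ofReal PB * ν (ball x₀ (2*R)) := setLIntegral_const _ _
      _ ≤ ENNReal.ofReal PB * (ENNReal.ofReal Cν * ν (ball x₀ R)) :=
          mul_le_mul_right (hdoub x₀ R hR) _
      _ = ENNReal.ofReal (Cν * PB) * ν (ball x₀ R) := by
          rw [ENNReal.ofReal_mul hCpos]; ring
  have hpart2 : (∫⁻ x in (ball x₀ (2*R))ᶜ, pe x ∂ν) ≤
      ENNReal.ofReal (Cν^3 * (1 - ((2:ℝ)^(θ*p))⁻¹)⁻¹ * (R^(θ*p))⁻¹) * ν (ball x₀ R) := by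
    have hcompl : (ball x₀ (2*R))ᶜ = {x : Y | 2*R ≤ dist x x₀} := by
      ext z; simp [mem_ball, not_lt]
    have hsub : {x : Y | 2*R ≤ dist x x₀} ⊆
        ⋃ k : ℕ, {x : Y | (2*R)*2^k ≤ dist x x₀ ∧ dist x x₀ < 2*((2*R)*2^k)} := by
      intro z hz
      obtain ⟨k, hk1, hk2⟩ := exists_dyadic_up (by linarith : (0:ℝ) < 2*R) hz
      exact mem_iUnion.2 ⟨k, hk1, by rw [show 2*((2*R)*2^k) = (2*R)*2^(k+1) by ring]; exact hk2⟩
    have hEk : ∀ k : ℕ, (∫⁻ x in {x : Y | (2*R)*2^k ≤ dist x x₀ ∧ dist x x₀ < 2*((2*R)*2^k)},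
        pe x ∂ν) ≤ ENNReal.ofReal (Cν^3 * ((R*2^k)^(θ*p))⁻¹) * ν (ball x₀ R) := by
      intro k
      have hsk : (0:ℝ) < (2*R)*2^k := by positivity
      have hRk : (0:ℝ) < R*2^k := by positivity
      have hb1 : 0 < ν (ball x₀ ((2*R)*2^k)) ∧ ν (ball x₀ ((2*R)*2^k)) < ∞ :=
        hballs x₀ _ hsk
      set ck : ℝ≥0∞ := ENNReal.ofReal (Cν^2 * ((R*2^k)^(θ*p))⁻¹) *
        (ν (ball x₀ R) / ν (ball x₀ ((2*R)*2^k))) with hck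
      have hmeask : MeasurableSet {x : Y | (2*R)*2^k ≤ dist x x₀ ∧ dist x x₀ < 2*((2*R)*2^k)} := by
        have hdm : Measurable (fun x : Y => dist x x₀) :=
          (continuous_id.dist continuous_const).measurable
        exact (measurableSet_le measurable_const hdm).inter
          (measurableSet_lt hdm measurable_const)
      have hpw : ∀ x ∈ {x : Y | (2*R)*2^k ≤ dist x x₀ ∧ dist x x₀ < 2*((2*R)*2^k)},
          pe x ≤ ck := by
        intro x hxk
        have hx2R : 2*R ≤ dist x x₀ := le_trans
          (le_mul_of_one_le_right (by linarith) (one_le_pow₀ (by norm_num))) hxk.1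
        refine le_trans (pe_far hθ0 hp hC hdoub hballs x₀ hR x hx2R) ?_
        rw [hck]
        apply mul_le_mul'
        · apply ENNReal.ofReal_le_ofReal
          apply mul_le_mul_of_nonneg_left _ (by positivity : (0:ℝ) ≤ Cν^2)
          apply inv_anti₀ (Real.rpow_pos_of_pos hRk _)
          apply Real.rpow_le_rpow hRk.le _ (by positivity)
          have := hxk.1
          linarith
        · exact ENNReal.div_le_div le_rfl (measure_mono (ball_subset_ball hxk.1))
      calc (∫⁻ x in {x : Y | (2*R)*2^k ≤ dist x x₀ ∧ dist x x₀ < 2*((2*R)*2^k)}, pe x ∂ν)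
          ≤ ∫⁻ _ in {x : Y | (2*R)*2^k ≤ dist x x₀ ∧ dist x x₀ < 2*((2*R)*2^k)}, ck ∂ν :=
            setLIntegral_mono' hmeask hpw
        _ = ck * ν {x : Y | (2*R)*2^k ≤ dist x x₀ ∧ dist x x₀ < 2*((2*R)*2^k)} :=
            setLIntegral_const _ _
        _ ≤ ck * ν (ball x₀ (2*((2*R)*2^k))) := by
            apply mul_le_mul_right
            apply measure_mono
            intro z hz
            exact mem_ball.2 hz.2
        _ ≤ ck * (ENNReal.ofReal Cν * ν (ball x₀ ((2*R)*2^k))) :=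
            mul_le_mul_right (hdoub x₀ _ hsk) _
        _ = ENNReal.ofReal (Cν^3 * ((R*2^k)^(θ*p))⁻¹) * ν (ball x₀ R) := by
            rw [hck, div_eq_mul_inv]
            have hcancel : (ν (ball x₀ ((2*R)*2^k)))⁻¹ * ν (ball x₀ ((2*R)*2^k)) = 1 :=
              ENNReal.inv_mul_cancel hb1.1.ne' hb1.2.ne
            calc ENNReal.ofReal (Cν^2 * ((R*2^k)^(θ*p))⁻¹) *
                  (ν (ball x₀ R) * (ν (ball x₀ ((2*R)*2^k)))⁻¹) *
                  (ENNReal.ofReal Cν * ν (ball x₀ ((2*R)*2^k)))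
                = ENNReal.ofReal Cν * ENNReal.ofReal (Cν^2 * ((R*2^k)^(θ*p))⁻¹) *
                  ν (ball x₀ R) * ((ν (ball x₀ ((2*R)*2^k)))⁻¹ * ν (ball x₀ ((2*R)*2^k))) := by
                  ring
              _ = ENNReal.ofReal Cν * ENNReal.ofReal (Cν^2 * ((R*2^k)^(θ*p))⁻¹) *
                  ν (ball x₀ R) := by rw [hcancel, mul_one]
              _ = ENNReal.ofReal (Cν^3 * ((R*2^k)^(θ*p))⁻¹) * ν (ball x₀ R) := by
                  rw [show Cν^3 * ((R*2^k)^(θ*p))⁻¹ = Cν * (Cν^2 * ((R*2^k)^(θ*p))⁻¹) by ring,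
                    ENNReal.ofReal_mul hCpos]
    calc (∫⁻ x in (ball x₀ (2*R))ᶜ, pe x ∂ν)
        = ∫⁻ x in {x : Y | 2*R ≤ dist x x₀}, pe x ∂ν := by rw [hcompl]
      _ ≤ ∫⁻ x in ⋃ k : ℕ, {x : Y | (2*R)*2^k ≤ dist x x₀ ∧ dist x x₀ < 2*((2*R)*2^k)},
            pe x ∂ν := lintegral_mono_set hsub
      _ ≤ ∑' k : ℕ, ∫⁻ x in {x : Y | (2*R)*2^k ≤ dist x x₀ ∧ dist x x₀ < 2*((2*R)*2^k)},
            pe x ∂ν := lintegral_iUnion_le _ _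
      _ ≤ ∑' k : ℕ, ENNReal.ofReal (Cν^3 * ((R*2^k)^(θ*p))⁻¹) * ν (ball x₀ R) :=
            ENNReal.tsum_le_tsum hEk
      _ = (∑' k : ℕ, ENNReal.ofReal (Cν^3 * ((R*2^k)^(θ*p))⁻¹)) * ν (ball x₀ R) :=
            ENNReal.tsum_mul_right
      _ = ENNReal.ofReal (Cν^3 * (1 - ((2:ℝ)^(θ*p))⁻¹)⁻¹ * (R^(θ*p))⁻¹) * ν (ball x₀ R) := by
          congr 1
          have hterm : ∀ k : ℕ, ENNReal.ofReal (Cν^3 * ((R*2^k)^(θ*p))⁻¹)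
              = ENNReal.ofReal (Cν^3 * (R^(θ*p))⁻¹) * (ENNReal.ofReal (((2:ℝ)^(θ*p))⁻¹))^k := by
            intro k
            rw [rpow_mul_pow hR k, mul_inv, ← inv_pow, ← mul_assoc,
              ENNReal.ofReal_mul (by positivity), ENNReal.ofReal_pow (by positivity)]
          rw [tsum_congr hterm, ENNReal.tsum_mul_left, geom_ofReal (by positivity)
            (by rw [inv_lt_one_iff₀]; right; exact one_lt_two_rpow hσ),
            ← ENNReal.ofReal_mul (by positivity)]
          congr 1
          ring
  rw [hsplit]
  calc (∫⁻ x in ball x₀ (2*R), pe x ∂ν) + ∫⁻ x in (ball x₀ (2*R))ᶜ, pe x ∂ν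
      ≤ ENNReal.ofReal (Cν * PB) * ν (ball x₀ R)
        + ENNReal.ofReal (Cν^3 * (1 - ((2:ℝ)^(θ*p))⁻¹)⁻¹ * (R^(θ*p))⁻¹) * ν (ball x₀ R) :=
        add_le_add hpart1 hpart2
    _ = _ := by
        rw [← add_mul, ← ENNReal.ofReal_add (by positivity) (by positivity)]
end Far


section Main
variable {Y : Type*} [MetricSpace Y] [MeasurableSpace Y] [BorelSpace Y]
variable {ν : Measure Y} {Cν : ℝ}

lemma cut_admissible [CompleteSpace Y] (hC : 1 < Cν) (hdoub : IsDoublingWith ν Cν)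
    (hballs : BallsPosFinite ν) (x₀ : Y) {r R : ℝ} (hr : 0 < r) (h2r : 2*r ≤ R) :
    condAdmissible (ball x₀ r) (ball x₀ R) (cutFn x₀ R) := by
  have hR : 0 < R := by linarith
  have hsupp : tsupport (cutFn x₀ R) ⊆ closedBall x₀ (3*R/4) := by
    apply closure_minimal _ Metric.isClosed_closedBall
    intro z hz
    rw [Function.mem_support] at hz
    rw [mem_closedBall]
    by_contra hlt
    push_neg at hlt
    exact hz (cutFn_eq_zero hR hlt.le)
  refine ⟨fun z => ⟨cutFn_nonneg x₀ R z, cutFn_le_one x₀ R z⟩,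
    ⟨ball x₀ (R/2), isOpen_ball, ball_subset_ball (by linarith), fun z hz =>
      cutFn_eq_one hR (mem_ball.1 hz)⟩, ?_, ?_⟩
  · exact (compact_closedBall hC hdoub hballs x₀ (3*R/4)).of_isClosed_subset
      (isClosed_tsupport (cutFn x₀ R)) hsupp
  · intro z hz
    have h1 := hsupp hz
    rw [mem_closedBall] at h1
    exact mem_ball.2 (lt_of_le_of_lt h1 (by linarith))

set_option maxHeartbeats 1000000 in
theorem stmt19_aux {Y : Type*} [MetricSpace Y] [MeasurableSpace Y] [BorelSpace Y] [CompleteSpace Y]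
    (ν : Measure Y) (θ p Cν κ : ℝ) (hθ0 : 0 < θ) (hθ1 : θ < 1) (hp : 1 ≤ p)
    (hC : 1 < Cν) (hdoub : IsDoublingWith ν Cν) (hballs : BallsPosFinite ν)
    (x₀ : Y)
    (R₀ : ℝ) (hR₀ : 0 < R₀)
    (c : ℝ) (hc : 0 < c)
    (hlow : ∀ r R : ℝ, 0 < r → 2 * r ≤ R → R ≤ R₀ →
        ENNReal.ofReal c * (ν (ball x₀ r) / ENNReal.ofReal (r ^ (θ * p))) ≤
          besovCondCap ν θ p (ball x₀ r) (ball x₀ R)) :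
    ∃ C : ℝ, 0 < C ∧ ∀ r R : ℝ, 0 < r → r < R → R ≤ 1 →
      ν (ball x₀ r) ≤ ENNReal.ofReal (C * (r / R) ^ (θ * p)) * ν (ball x₀ R) := by
  have hp0 : (0:ℝ) < p := lt_of_lt_of_le one_pos hp
  have hσ : (0:ℝ) < θ*p := by positivity
  have hτ : (0:ℝ) < p - θ*p := by nlinarith
  have hCpos : (0:ℝ) < Cν := lt_trans one_pos hC
  have hγτ : (0:ℝ) < 1 - ((2:ℝ)^(p - θ*p))⁻¹ := by
    have h := one_lt_two_rpow hτ
    have : ((2:ℝ)^(p-θ*p))⁻¹ < 1 := by rw [inv_lt_one_iff₀]; right; assumption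
    linarith
  have hγσ : (0:ℝ) < 1 - ((2:ℝ)^(θ*p))⁻¹ := by
    have h := one_lt_two_rpow hσ
    have : ((2:ℝ)^(θ*p))⁻¹ < 1 := by rw [inv_lt_one_iff₀]; right; assumption
    linarith
  set γτ : ℝ := (1 - ((2:ℝ)^(p - θ*p))⁻¹)⁻¹ with hγτdef
  set γσ : ℝ := (1 - ((2:ℝ)^(θ*p))⁻¹)⁻¹ with hγσdef
  set K : ℝ := Cν^2 * γτ * 4^p + Cν^2 * γσ + Cν^3 * γσ with hKdef
  have hγτpos : 0 < γτ := by rw [hγτdef]; positivity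
  have hγσpos : 0 < γσ := by rw [hγσdef]; positivity
  have hK : 0 < K := by
    rw [hKdef]
    have h4 : (0:ℝ) < (4:ℝ)^p := Real.rpow_pos_of_pos (by norm_num) p
    positivity
  -- Step (⋆)
  have hstar : ∀ r R : ℝ, 0 < r → 2*r ≤ R → R ≤ R₀ →
      ν (ball x₀ r) ≤ ENNReal.ofReal ((K/c) * (r/R)^(θ*p)) * ν (ball x₀ R) := by
    intro r R hr h2r hRR₀
    have hR : 0 < R := by linarith
    have hcap : besovCondCap ν θ p (ball x₀ r) (ball x₀ R) ≤
        besovEnergy ν θ p (cutFn x₀ R) :=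
      iInf₂_le (cutFn x₀ R) (cut_admissible hC hdoub hballs x₀ hr h2r)
    have hconst : Cν * (Cν * γτ * ((4/R)^p * R^(p - θ*p)) + Cν * γσ * (R^(θ*p))⁻¹)
        + Cν^3 * γσ * (R^(θ*p))⁻¹ = K * (R^(θ*p))⁻¹ := by
      have h4 : (4/R)^p * R^(p-θ*p) = 4^p * (R^(θ*p))⁻¹ := by
        rw [Real.div_rpow (by norm_num) hR.le, Real.rpow_sub hR]
        have h1 : R^p ≠ 0 := (Real.rpow_pos_of_pos hR p).ne'
        have h2 : R^(θ*p) ≠ 0 := (Real.rpow_pos_of_pos hR (θ*p)).ne'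
        field_simp
      rw [h4, hKdef]
      ring
    have henergy := energy_cut_le hθ0 hθ1 hp hC hdoub hballs x₀ hR
    rw [hconst] at henergy
    have hchain : ENNReal.ofReal c * (ν (ball x₀ r) / ENNReal.ofReal (r ^ (θ * p))) ≤
        ENNReal.ofReal (K * (R^(θ*p))⁻¹) * ν (ball x₀ R) :=
      le_trans (hlow r R hr h2r hRR₀) (le_trans hcap henergy)
    have hc0 : ENNReal.ofReal c ≠ 0 := (ENNReal.ofReal_pos.2 hc).ne'
    have hrσ0 : ENNReal.ofReal (r^(θ*p)) ≠ 0 :=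
      (ENNReal.ofReal_pos.2 (Real.rpow_pos_of_pos hr (θ*p))).ne'
    have h2 : ν (ball x₀ r) / ENNReal.ofReal (r ^ (θ * p)) ≤
        (ENNReal.ofReal c)⁻¹ * (ENNReal.ofReal (K * (R^(θ*p))⁻¹) * ν (ball x₀ R)) :=
      (ENNReal.mul_le_iff_le_inv hc0 ENNReal.ofReal_ne_top).1 hchain
    have h3 : ν (ball x₀ r) ≤ (ENNReal.ofReal c)⁻¹ *
        (ENNReal.ofReal (K * (R^(θ*p))⁻¹) * ν (ball x₀ R)) * ENNReal.ofReal (r^(θ*p)) :=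
      (ENNReal.div_le_iff hrσ0 ENNReal.ofReal_ne_top).1 h2
    refine le_trans h3 (le_of_eq ?_)
    rw [← ENNReal.ofReal_inv_of_pos hc]
    rw [show (ENNReal.ofReal c⁻¹ * (ENNReal.ofReal (K * (R ^ (θ * p))⁻¹) * ν (ball x₀ R)) *
        ENNReal.ofReal (r ^ (θ * p)))
      = ENNReal.ofReal c⁻¹ * ENNReal.ofReal (K * (R ^ (θ * p))⁻¹) *
        ENNReal.ofReal (r ^ (θ * p)) * ν (ball x₀ R) by ring]
    rw [← ENNReal.ofReal_mul (by positivity), ← ENNReal.ofReal_mul (by positivity)]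
    congr 1
    rw [Real.div_rpow hr.le hR.le]
    have h1 : R^(θ*p) ≠ 0 := (Real.rpow_pos_of_pos hR (θ*p)).ne'
    field_simp
  -- Step: extend to all r < R ≤ R₀
  set C₁ : ℝ := K/c + 2^(θ*p) with hC₁def
  have h2σpos : (0:ℝ) < 2^(θ*p) := Real.rpow_pos_of_pos (by norm_num) _
  have hC₁pos : 0 < C₁ := by rw [hC₁def]; positivity
  have hclaim1 : ∀ r R : ℝ, 0 < r → r < R → R ≤ R₀ →
      ν (ball x₀ r) ≤ ENNReal.ofReal (C₁ * (r/R)^(θ*p)) * ν (ball x₀ R) := by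
    intro r R hr hrR hRR₀
    have hR : 0 < R := lt_trans hr hrR
    have hrRpos : 0 < r/R := by positivity
    rcases le_or_gt (2*r) R with h2r | h2r
    · refine le_trans (hstar r R hr h2r hRR₀) ?_
      apply mul_le_mul_left
      apply ENNReal.ofReal_le_ofReal
      apply mul_le_mul_of_nonneg_right _ (Real.rpow_nonneg hrRpos.le _)
      rw [hC₁def]
      linarith
    · have hhalf : (1:ℝ)/2 ≤ r/R := by
        rw [div_le_div_iff₀ (by norm_num) hR]
        linarith
      have hge1 : (1:ℝ) ≤ C₁ * (r/R)^(θ*p) := by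
        have hb : ((1:ℝ)/2)^(θ*p) ≤ (r/R)^(θ*p) :=
          Real.rpow_le_rpow (by norm_num) hhalf hσ.le
        have hmul : (2:ℝ)^(θ*p) * ((1:ℝ)/2)^(θ*p) = 1 := by
          rw [← Real.mul_rpow (by norm_num) (by norm_num)]
          norm_num
        have hC₁ge : 2^(θ*p) ≤ C₁ := by
          rw [hC₁def]
          have : 0 < K/c := by positivity
          linarith
        calc (1:ℝ) = 2^(θ*p) * ((1:ℝ)/2)^(θ*p) := hmul.symm
          _ ≤ C₁ * (r/R)^(θ*p) := by
              apply mul_le_mul hC₁ge hb (by positivity) (le_of_lt hC₁pos)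
      calc ν (ball x₀ r) ≤ ν (ball x₀ R) := measure_mono (ball_subset_ball hrR.le)
        _ = 1 * ν (ball x₀ R) := (one_mul _).symm
        _ ≤ ENNReal.ofReal (C₁ * (r/R)^(θ*p)) * ν (ball x₀ R) :=
            mul_le_mul_left (ENNReal.one_le_ofReal.2 hge1) _
  -- Final constant
  set C : ℝ := (C₁ + 1) * (1 + (R₀^(θ*p))⁻¹) with hCdef
  have hR₀σ : (0:ℝ) < R₀^(θ*p) := Real.rpow_pos_of_pos hR₀ _
  have hCpos' : 0 < C := by rw [hCdef]; positivity
  refine ⟨C, hCpos', ?_⟩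
  intro r R hr hrR hR1
  have hR : 0 < R := lt_trans hr hrR
  have hrRpos : 0 < r/R := by positivity
  have hrRσ : (0:ℝ) < (r/R)^(θ*p) := Real.rpow_pos_of_pos hrRpos _
  rcases le_or_gt R R₀ with hRR₀ | hRR₀
  · refine le_trans (hclaim1 r R hr hrR hRR₀) ?_
    apply mul_le_mul_left
    apply ENNReal.ofReal_le_ofReal
    apply mul_le_mul_of_nonneg_right _ hrRσ.le
    rw [hCdef]
    nlinarith [mul_nonneg hC₁pos.le (inv_nonneg.2 hR₀σ.le), inv_nonneg.2 hR₀σ.le, hC₁pos]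
  · rcases lt_or_ge r R₀ with hrR₀ | hrR₀
    · -- r < R₀ < R ≤ 1
      have h1 : ν (ball x₀ r) ≤ ENNReal.ofReal (C₁ * (r/R₀)^(θ*p)) * ν (ball x₀ R₀) :=
        hclaim1 r R₀ hr hrR₀ le_rfl
      have h2 : ν (ball x₀ R₀) ≤ ν (ball x₀ R) := measure_mono (ball_subset_ball hRR₀.le)
      refine le_trans (le_trans h1 (mul_le_mul_right h2 _)) ?_
      apply mul_le_mul_left
      apply ENNReal.ofReal_le_ofReal
      have hkey : (r/R₀)^(θ*p) = (r/R)^(θ*p) * (R/R₀)^(θ*p) := by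
        rw [← Real.mul_rpow (by positivity) (by positivity)]
        congr 1
        field_simp
      have hRR₀σ : (R/R₀)^(θ*p) ≤ (R₀^(θ*p))⁻¹ := by
        have hd : R/R₀ ≤ 1/R₀ := by gcongr
        calc (R/R₀)^(θ*p) ≤ ((1:ℝ)/R₀)^(θ*p) :=
            Real.rpow_le_rpow (by positivity) hd hσ.le
          _ = (R₀^(θ*p))⁻¹ := by
              rw [one_div, Real.inv_rpow hR₀.le]
      calc C₁ * (r/R₀)^(θ*p) = C₁ * ((r/R)^(θ*p) * (R/R₀)^(θ*p)) := by rw [hkey]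
        _ ≤ C₁ * ((r/R)^(θ*p) * (R₀^(θ*p))⁻¹) := by
            apply mul_le_mul_of_nonneg_left _ hC₁pos.le
            exact mul_le_mul_of_nonneg_left hRR₀σ hrRσ.le
        _ = (C₁ * (R₀^(θ*p))⁻¹) * (r/R)^(θ*p) := by ring
        _ ≤ C * (r/R)^(θ*p) := by
            have hCC : C₁ * (R₀^(θ*p))⁻¹ ≤ C := by
              rw [hCdef]
              nlinarith [mul_nonneg hC₁pos.le (inv_nonneg.2 hR₀σ.le), inv_nonneg.2 hR₀σ.le, hC₁pos]
            exact mul_le_mul_of_nonneg_right hCC hrRσ.le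
    · -- R₀ ≤ r < R ≤ 1
      have hge1 : (1:ℝ) ≤ C * (r/R)^(θ*p) := by
        have hrRge : R₀ ≤ r/R := by
          rw [le_div_iff₀ hR]
          nlinarith [mul_le_mul_of_nonneg_left hR1 hR₀.le]
        have h1 : R₀^(θ*p) ≤ (r/R)^(θ*p) := Real.rpow_le_rpow hR₀.le hrRge hσ.le
        have hCge : (R₀^(θ*p))⁻¹ ≤ C := by
          rw [hCdef]
          nlinarith [mul_nonneg hC₁pos.le (inv_nonneg.2 hR₀σ.le), inv_nonneg.2 hR₀σ.le, hC₁pos]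
        calc (1:ℝ) = (R₀^(θ*p))⁻¹ * R₀^(θ*p) := (inv_mul_cancel₀ hR₀σ.ne').symm
          _ ≤ C * (r/R)^(θ*p) := mul_le_mul hCge h1 hR₀σ.le hCpos'.le
      calc ν (ball x₀ r) ≤ ν (ball x₀ R) := measure_mono (ball_subset_ball hrR.le)
        _ = 1 * ν (ball x₀ R) := (one_mul _).symm
        _ ≤ ENNReal.ofReal (C * (r/R)^(θ*p)) * ν (ball x₀ R) :=
            mul_le_mul_left (ENNReal.one_le_ofReal.2 hge1) _

end Main


end AuxAll

theorem stmt19 {Y : Type*} [MetricSpace Y] [MeasurableSpace Y] [BorelSpace Y] [CompleteSpace Y]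
    (ν : Measure Y) (θ p Cν κ : ℝ) (hθ0 : 0 < θ) (hθ1 : θ < 1) (hp : 1 ≤ p)
    (hC : 1 < Cν) (hdoub : IsDoublingWith ν Cν) (hballs : BallsPosFinite ν)
    (x₀ : Y) (hκ : 1 < κ) (hup : UnifPerfectAt x₀ κ)
    (R₀ : ℝ) (hR₀ : 0 < R₀)
    (hdiam : ENNReal.ofReal (4 * R₀) ≤ EMetric.diam (univ : Set Y))
    (c : ℝ) (hc : 0 < c)
    (hlow : ∀ r R : ℝ, 0 < r → 2 * r ≤ R → R ≤ R₀ →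
        ENNReal.ofReal c * (ν (ball x₀ r) / ENNReal.ofReal (r ^ (θ * p))) ≤
          besovCondCap ν θ p (ball x₀ r) (ball x₀ R)) :
    ∃ C : ℝ, 0 < C ∧ ∀ r R : ℝ, 0 < r → r < R → R ≤ 1 →
      ν (ball x₀ r) ≤ ENNReal.ofReal (C * (r / R) ^ (θ * p)) * ν (ball x₀ R) := by
  exact stmt19_aux ν θ p Cν κ hθ0 hθ1 hp hC hdoub hballs x₀ R₀ hR₀ c hc hlow
end
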